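/- arXiv:2203.16081 — 12 statements merged into one kernel-verified Lean document; each statement's English description precedes it below -/
import Mathlib

section
/- Let q be an odd prime power and m > 1 a divisor of q+1. In the generalised Paley graph GP(q^2, m), the number of m-ary lines of AG(2,q) passing through any given point is exactly (q+1)/m. -/
open Polynomial Finset

section Aux

variable {F : Type*} [Field F] [Fintype F]

private lemma exists_primRoot (F : Type*) [Field F] [Fintype F] :
    ∃ g : Fˣ, IsPrimitiveRoot (g : F) (Fintype.card F - 1) ∧
      ∀ x : Fˣ, x ∈ Subgroup.zpowers g := by
  obtain ⟨g, hg⟩ := IsCyclic.exists_generator (α := Fˣ)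
  have hord : orderOf g = Fintype.card F - 1 := by
    rw [orderOf_eq_card_of_forall_mem_zpowers hg, Nat.card_units, Nat.card_eq_fintype_card]
  refine ⟨g, ?_, hg⟩
  have := IsPrimitiveRoot.orderOf (g : F)
  rwa [orderOf_units, hord] at this

private lemma card_nthRootsFinset_of_dvd (d : ℕ) (hd : 0 < d)
    (hdvd : d ∣ Fintype.card F - 1) :
    (Polynomial.nthRootsFinset d (1 : F)).card = d := by
  obtain ⟨g, hg, -⟩ := exists_primRoot F
  obtain ⟨e, he⟩ := hdvd
  have hN : 0 < Fintype.card F - 1 := by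
    have h2 : 2 ≤ Fintype.card F := Fintype.one_lt_card
    have : 0 < d * e := by
      rcases Nat.eq_zero_or_pos (d * e) with h | h
      · omega
      · exact h
    omega
  have hprim : IsPrimitiveRoot ((g : F) ^ e) d :=
    hg.pow hN (by rw [he, mul_comm])
  exact hprim.card_nthRootsFinset

private lemma kstar_is_mth_power (q m : ℕ) (hq : 1 < q) (hdvd : m ∣ q + 1)
    (hF : Fintype.card F = q ^ 2) {c : F} (hc0 : c ≠ 0) (hc : c ^ q = c) :
    ∃ y : F, y ≠ 0 ∧ y ^ m = c := by
  obtain ⟨g, -, hg⟩ := exists_primRoot F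
  have hord : orderOf g = q ^ 2 - 1 := by
    rw [orderOf_eq_card_of_forall_mem_zpowers hg, Nat.card_units, Nat.card_eq_fintype_card, hF]
  set u : Fˣ := Units.mk0 c hc0 with hu_def
  obtain ⟨k, hk⟩ := mem_powers_iff_mem_zpowers.mpr (hg u)
  have hk' : g ^ k = u := hk
  have hcq : c ^ (q - 1) = 1 := by
    have h1 : c ^ (q - 1) * c = 1 * c := by
      rw [one_mul, ← pow_succ, (by omega : q - 1 + 1 = q), hc]
    exact mul_right_cancel₀ hc0 h1
  have hu : u ^ (q - 1) = 1 := by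
    ext
    push_cast
    exact hcq
  have hpow1 : g ^ (k * (q - 1)) = 1 := by rw [pow_mul, hk', hu]
  have hdvd2 : q ^ 2 - 1 ∣ k * (q - 1) := hord ▸ orderOf_dvd_of_pow_eq_one hpow1
  have hfac : q ^ 2 - 1 = (q + 1) * (q - 1) := by
    have := Nat.sq_sub_sq q 1
    simpa using this
  have hq1 : (q + 1) ∣ k := by
    rw [hfac] at hdvd2
    exact (Nat.mul_dvd_mul_iff_right (by omega : 0 < q - 1)).mp hdvd2
  obtain ⟨t, rfl⟩ := hq1
  obtain ⟨s, hs⟩ := hdvd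
  refine ⟨((g ^ (s * t) : Fˣ) : F), Units.ne_zero _, ?_⟩
  have hpow : (g ^ (s * t)) ^ m = u := by
    rw [← hk', ← pow_mul]
    congr 1
    rw [hs]; ring
  calc ((g ^ (s * t) : Fˣ) : F) ^ m = (((g ^ (s * t)) ^ m : Fˣ) : F) := by push_cast; ring
    _ = (u : F) := by rw [hpow]
    _ = c := rfl

private lemma line_eq_iff {F : Type*} [Field F] (q : ℕ) (a b b' : F)
    (hb : b ≠ 0) :
    {z : F | ∃ c : F, c ^ q = c ∧ z = a + c * b} =
      {z : F | ∃ c : F, c ^ q = c ∧ z = a + c * b'} ↔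
      ∃ c : F, c ^ q = c ∧ c ≠ 0 ∧ b = c * b' := by
  constructor
  · intro h
    have hmem : (a + b) ∈ {z : F | ∃ c : F, c ^ q = c ∧ z = a + c * b} :=
      ⟨1, one_pow q, by ring⟩
    rw [h] at hmem
    obtain ⟨c, hcq, hcz⟩ := hmem
    have hbc : b = c * b' := by
      have := hcz
      linear_combination this
    exact ⟨c, hcq, fun h0 => hb (by simp [hbc, h0]), hbc⟩
  · rintro ⟨c, hcq, hc0, rfl⟩
    ext z
    simp only [Set.mem_setOf_eq]
    constructor
    · rintro ⟨d, hd, rfl⟩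
      exact ⟨d * c, by rw [mul_pow, hd, hcq], by ring⟩
    · rintro ⟨d, hd, rfl⟩
      refine ⟨d * c⁻¹, by rw [mul_pow, hd, inv_pow, hcq], ?_⟩
      congr 1
      rw [mul_assoc, inv_mul_cancel_left₀ hc0]

end Aux

/-- In `GP(q^2, m)` with `m > 1`, `m ∣ q+1`, the number of `m`-ary lines of
`AG(2,q)` through any given point `a` is exactly `(q+1)/m`. A line through `a` with slope
`b` is `{a + c*b : c ∈ F_q}`, and it is `m`-ary when `b` is an `m`-th power in `F_{q^2}^*`. -/
theorem number_of_mary_lines_through_point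
    (q m : ℕ) (hq : ∃ p n : ℕ, p.Prime ∧ Odd p ∧ 0 < n ∧ q = p ^ n)
    (hm : 1 < m) (hdvd : m ∣ q + 1)
    (F : Type*) [Field F] [Fintype F] (hF : Fintype.card F = q ^ 2)
    (a : F) :
    Set.ncard {L : Set F | ∃ b : F, b ≠ 0 ∧ (∃ y : F, y ≠ 0 ∧ y ^ m = b) ∧
      L = {z : F | ∃ c : F, c ^ q = c ∧ z = a + c * b}} = (q + 1) / m := by
  classical
  have hq1 : 1 < q := by
    obtain ⟨p, n, hp, -, hn, rfl⟩ := hq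
    exact Nat.one_lt_pow (by omega) hp.one_lt
  have hm0 : 0 < m := by omega
  have hfac : q ^ 2 - 1 = (q + 1) * (q - 1) := by
    have := Nat.sq_sub_sq q 1
    simpa using this
  have hmdvdN : m ∣ q ^ 2 - 1 := by
    rw [hfac]; exact Dvd.dvd.mul_right hdvd _
  have hq1dvdN : q - 1 ∣ q ^ 2 - 1 := by
    rw [hfac]; exact ⟨q + 1, by ring⟩
  set f : F → Set F := fun b => {z : F | ∃ c : F, c ^ q = c ∧ z = a + c * b} with hf
  set B : Finset F :=
    Finset.univ.filter (fun b : F => b ≠ 0 ∧ ∃ y : F, y ≠ 0 ∧ y ^ m = b) with hB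
  have hBmem : ∀ b : F, b ∈ B ↔ b ≠ 0 ∧ ∃ y : F, y ≠ 0 ∧ y ^ m = b := by
    intro b
    simp [hB]
  have hSet : {L : Set F | ∃ b : F, b ≠ 0 ∧ (∃ y : F, y ≠ 0 ∧ y ^ m = b) ∧
      L = {z : F | ∃ c : F, c ^ q = c ∧ z = a + c * b}} = ↑(B.image f) := by
    ext L
    simp only [Set.mem_setOf_eq, Finset.coe_image, Set.mem_image, Finset.mem_coe]
    constructor
    · rintro ⟨b, hb, hy, rfl⟩
      exact ⟨b, (hBmem b).mpr ⟨hb, hy⟩, rfl⟩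
    · rintro ⟨b, hb, rfl⟩
      obtain ⟨hb0, hy⟩ := (hBmem b).mp hb
      exact ⟨b, hb0, hy, rfl⟩
  rw [hSet, Set.ncard_coe_finset]
  -- characterization of the (q-1)-th roots of unity
  have hK : ∀ c : F, c ∈ nthRootsFinset (q - 1) (1 : F) ↔ c ^ q = c ∧ c ≠ 0 := by
    intro c
    rw [Polynomial.mem_nthRootsFinset (by omega : 0 < q - 1)]
    constructor
    · intro h
      have hc0 : c ≠ 0 := by
        rintro rfl
        rw [zero_pow (by omega : q - 1 ≠ 0)] at h
        exact zero_ne_one h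
      refine ⟨?_, hc0⟩
      calc c ^ q = c ^ (q - 1 + 1) := by congr 1; omega
        _ = c ^ (q - 1) * c := pow_succ _ _
        _ = c := by rw [h, one_mul]
    · rintro ⟨hcq, hc0⟩
      have h1 : c ^ (q - 1) * c = 1 * c := by
        rw [one_mul, ← pow_succ, (by omega : q - 1 + 1 = q), hcq]
      exact mul_right_cancel₀ hc0 h1
  have hKcard : (nthRootsFinset (q - 1) (1 : F)).card = q - 1 :=
    card_nthRootsFinset_of_dvd (q - 1) (by omega) (by rw [hF]; exact hq1dvdN)
  have hMcard : (nthRootsFinset m (1 : F)).card = m :=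
    card_nthRootsFinset_of_dvd m hm0 (by rw [hF]; exact hmdvdN)
  -- E1 : counting nonzero elements fiberwise over the power map
  have hNZ : (Finset.univ.filter (fun y : F => y ≠ 0)).card = q ^ 2 - 1 := by
    rw [Finset.filter_ne', Finset.card_erase_of_mem (Finset.mem_univ 0),
      Finset.card_univ, hF]
  have E1 : q ^ 2 - 1 = B.card * m := by
    rw [← hNZ,
      Finset.card_eq_sum_card_fiberwise
        (f := fun y : F => y ^ m) (t := B)
        (fun y hy => by
          have hy0 : y ≠ 0 := (Finset.mem_filter.mp hy).2
          exact (hBmem _).mpr ⟨pow_ne_zero m hy0, ⟨y, hy0, rfl⟩⟩)]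
    rw [Finset.sum_congr rfl (fun b hb => ?_), Finset.sum_const, smul_eq_mul]
    obtain ⟨hb0, y₀, hy₀0, hy₀⟩ := (hBmem b).mp hb
    have hfib : (Finset.univ.filter (fun y : F => y ≠ 0)).filter (fun y => y ^ m = b) =
        (nthRootsFinset m (1 : F)).image (fun ζ => ζ * y₀) := by
      ext y
      simp only [Finset.mem_filter, Finset.mem_univ, true_and, Finset.mem_image]
      constructor
      · rintro ⟨hy0, hym⟩
        refine ⟨y * y₀⁻¹, ?_, by field_simp⟩
        rw [Polynomial.mem_nthRootsFinset hm0, mul_pow, hym, ← hy₀, inv_pow,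
          mul_inv_cancel₀ (pow_ne_zero m hy₀0)]
      · rintro ⟨ζ, hζ, rfl⟩
        rw [Polynomial.mem_nthRootsFinset hm0] at hζ
        have hζ0 : ζ ≠ 0 := by
          rintro rfl
          rw [zero_pow (by omega : m ≠ 0)] at hζ
          exact zero_ne_one hζ
        exact ⟨mul_ne_zero hζ0 hy₀0, by rw [mul_pow, hζ, one_mul, hy₀]⟩
    rw [hfib, Finset.card_image_of_injective _ (mul_left_injective₀ hy₀0), hMcard]
  -- E2 : counting B fiberwise over f
  have E2 : B.card = (B.image f).card * (q - 1) := by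
    rw [Finset.card_eq_sum_card_fiberwise
        (f := f) (t := B.image f) (fun b hb => Finset.mem_image_of_mem f hb)]
    rw [Finset.sum_congr rfl (fun L hL => ?_), Finset.sum_const, smul_eq_mul]
    obtain ⟨b₀, hb₀B, rfl⟩ := Finset.mem_image.mp hL
    obtain ⟨hb₀0, y₀, hy₀0, hy₀⟩ := (hBmem b₀).mp hb₀B
    have hfib : B.filter (fun b => f b = f b₀) =
        (nthRootsFinset (q - 1) (1 : F)).image (fun c => c * b₀) := by
      ext b
      simp only [Finset.mem_filter, Finset.mem_image]
      constructor
      · rintro ⟨hbB, hfb⟩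
        obtain ⟨hb0, -⟩ := (hBmem b).mp hbB
        obtain ⟨c, hcq, hc0, hbc⟩ := (line_eq_iff q a b b₀ hb0).mp hfb
        exact ⟨c, (hK c).mpr ⟨hcq, hc0⟩, hbc.symm⟩
      · rintro ⟨c, hc, rfl⟩
        obtain ⟨hcq, hc0⟩ := (hK c).mp hc
        obtain ⟨y₁, hy₁0, hy₁⟩ := kstar_is_mth_power q m hq1 hdvd hF hc0 hcq
        refine ⟨(hBmem _).mpr ⟨mul_ne_zero hc0 hb₀0,
          ⟨y₁ * y₀, mul_ne_zero hy₁0 hy₀0, by rw [mul_pow, hy₁, hy₀]⟩⟩, ?_⟩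
        exact (line_eq_iff q a (c * b₀) b₀ (mul_ne_zero hc0 hb₀0)).mpr ⟨c, hcq, hc0, rfl⟩
    rw [hfib, Finset.card_image_of_injective _ (mul_left_injective₀ hb₀0), hKcard]
  -- final arithmetic
  have key : (B.image f).card * m = q + 1 := by
    have h1 : (B.image f).card * m * (q - 1) = (q + 1) * (q - 1) := by
      calc (B.image f).card * m * (q - 1) = (B.image f).card * (q - 1) * m := by ring
        _ = B.card * m := by rw [← E2]
        _ = q ^ 2 - 1 := E1.symm
        _ = (q + 1) * (q - 1) := hfac
    exact Nat.eq_of_mul_eq_mul_right (by omega : 0 < q - 1) h1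
  rw [← key, Nat.mul_div_cancel _ hm0]
end

section
/- Let q be an odd prime power, m > 1 a divisor of q+1, and α ∈ F_{q^2} with α^2 = d a non-square in F_q^*. The line {cα : c ∈ F_q} is m-ary if and only if m divides (q+1)/2. -/
/-- In a finite field, a nonzero element is an `m`-th power (with `m ∣ card F - 1`)
iff raising it to `(card F - 1)/m` gives `1`. -/
lemma finite_field_pow_mem_iff {F : Type*} [Field F] [Fintype F] (m : ℕ) (hm : 0 < m)
    (hmd : m ∣ Fintype.card F - 1) (a : Fˣ) :
    (∃ γ : Fˣ, γ ^ m = a) ↔ a ^ ((Fintype.card F - 1) / m) = 1 := by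
  have hcard : Nat.card Fˣ = Fintype.card F - 1 := by
    rw [Nat.card_units, Nat.card_eq_fintype_card]
  have hNpos : 0 < Fintype.card F - 1 := by rw [← hcard]; exact Nat.card_pos
  have hNm : m * ((Fintype.card F - 1) / m) = Fintype.card F - 1 := Nat.mul_div_cancel' hmd
  have hNmpos : 0 < (Fintype.card F - 1) / m := Nat.div_pos (Nat.le_of_dvd hNpos hmd) hm
  constructor
  · rintro ⟨γ, rfl⟩
    rw [← pow_mul, hNm, ← hcard]
    exact pow_card_eq_one'
  · intro h
    obtain ⟨g, hg⟩ := IsCyclic.exists_generator (α := Fˣ)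
    have hog : orderOf g = Nat.card Fˣ := orderOf_eq_card_of_forall_mem_zpowers hg
    obtain ⟨k, hk⟩ := mem_powers_iff_mem_zpowers.mpr (hg a)
    have hk' : g ^ k = a := hk
    have h1 : g ^ (k * ((Fintype.card F - 1) / m)) = 1 := by rw [pow_mul, hk', h]
    have h2 := orderOf_dvd_of_pow_eq_one h1
    rw [hog, hcard] at h2
    have h3 : m * ((Fintype.card F - 1) / m) ∣ k * ((Fintype.card F - 1) / m) := by
      rw [hNm]; exact h2
    have hmk : m ∣ k := (Nat.mul_dvd_mul_iff_right hNmpos).mp h3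
    obtain ⟨j, rfl⟩ := hmk
    exact ⟨g ^ j, by rw [← pow_mul, mul_comm j m, hk']⟩

/-- With `α^2 = d` a non-square in `F_q^*`, the line `{cα : c ∈ F_q}` is
`m`-ary (its slope `α` is an `m`-th power in `F_{q^2}^*`) iff `m` divides `(q+1)/2`. -/
theorem alpha_line_mary_iff
    (q m : ℕ) (hq : ∃ p n : ℕ, p.Prime ∧ Odd p ∧ 0 < n ∧ q = p ^ n)
    (hm : 1 < m) (hdvd : m ∣ q + 1)
    (F : Type*) [Field F] [Fintype F] (hF : Fintype.card F = q ^ 2)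
    (d α : F) (hdq : d ^ q = d) (hd0 : d ≠ 0)
    (hns : ¬∃ s : F, s ^ q = s ∧ s ^ 2 = d) (hα : α ^ 2 = d) :
    (∃ γ : F, γ ≠ 0 ∧ γ ^ m = α) ↔ m ∣ (q + 1) / 2 := by
  obtain ⟨p, n, hp, hpodd, hn, rfl⟩ := hq
  set q := p ^ n with hq'
  have hqodd : Odd q := hpodd.pow
  have hq3 : 3 ≤ q := by
    have : 2 ≤ p := hp.two_le
    have hp3 : 3 ≤ p := by
      rcases hpodd with ⟨t, ht⟩; omega
    calc 3 ≤ p := hp3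
    _ = p ^ 1 := (pow_one p).symm
    _ ≤ p ^ n := Nat.pow_le_pow_right (by omega) hn
  have hα0 : α ≠ 0 := by
    intro h; apply hd0; rw [← hα, h]; ring
  -- α^q = -α
  have hαq2 : (α ^ q) ^ 2 = d := by
    rw [← pow_mul, mul_comm, pow_mul, hα, hdq]
  have hfac : (α ^ q + α) * (α ^ q - α) = 0 := by
    have : (α ^ q + α) * (α ^ q - α) = (α ^ q) ^ 2 - α ^ 2 := by ring
    rw [this, hαq2, hα, sub_self]
  have hαq : α ^ q = -α := by
    rcases mul_eq_zero.mp hfac with h | h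
    · linear_combination h
    · exfalso; exact hns ⟨α, by linear_combination h, hα⟩
  -- α^(q-1) = -1
  have hαq1 : α ^ (q - 1) = -1 := by
    have h1 : α ^ (q - 1) * α = α ^ q := by
      rw [← pow_succ]; congr 1; omega
    have h2 : α ^ (q - 1) * α = (-1) * α := by rw [h1, hαq]; ring
    exact mul_right_cancel₀ hα0 h2
  -- char ≠ 2, so -1 ≠ 1
  have hchar : ringChar F ≠ 2 := by
    intro h
    have heven := FiniteField.even_card_iff_char_two.mp h
    rw [hF] at heven
    obtain ⟨t, ht⟩ : Odd (q ^ 2) := hqodd.pow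
    omega
  have hne : (-1 : F) ≠ 1 := Ring.neg_one_ne_one_of_char_ne_two hchar
  -- divisibility setup
  have hcard1 : Fintype.card F - 1 = (q - 1) * (q + 1) := by
    rw [hF]
    have h1 : 1 ≤ q ^ 2 := Nat.one_le_pow _ _ (by omega)
    zify [h1, show 1 ≤ q by omega]
    ring
  have hmN : m ∣ Fintype.card F - 1 := hcard1 ▸ hdvd.mul_left (q - 1)
  have hdivN : (Fintype.card F - 1) / m = (q - 1) * ((q + 1) / m) := by
    rw [hcard1, Nat.mul_div_assoc _ hdvd]
  -- the power criterion
  have hmpos : 0 < m := by omega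
  have hunits : (∃ γ : F, γ ≠ 0 ∧ γ ^ m = α) ↔
      (∃ γ : Fˣ, γ ^ m = Units.mk0 α hα0) := by
    constructor
    · rintro ⟨γ, hγ0, hγ⟩
      exact ⟨Units.mk0 γ hγ0, by ext; simp [hγ]⟩
    · rintro ⟨γ, hγ⟩
      refine ⟨(γ : F), γ.ne_zero, ?_⟩
      have := congrArg (Units.val) hγ
      simpa using this
  rw [hunits, finite_field_pow_mem_iff m hmpos hmN]
  have hval : (Units.mk0 α hα0) ^ ((Fintype.card F - 1) / m) = 1 ↔
      α ^ ((Fintype.card F - 1) / m) = 1 := by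
    constructor
    · intro h; have := congrArg (Units.val) h; simpa using this
    · intro h; ext; simpa using h
  rw [hval, hdivN, pow_mul, hαq1]
  -- now: (-1)^((q+1)/m) = 1 ↔ m ∣ (q+1)/2
  have h2q : 2 ∣ q + 1 := by rcases hqodd with ⟨t, ht⟩; omega
  rw [show ((-1 : F)) ^ ((q+1)/m) = 1 ↔ Even ((q+1)/m) from
    ⟨fun h => by by_contra hodd; rw [(Nat.not_even_iff_odd.mp hodd).neg_one_pow] at h
                 exact hne h,
     fun h => h.neg_one_pow⟩]
  rw [show Even ((q+1)/m) ↔ 2 ∣ (q+1)/m from ⟨Even.two_dvd, fun ⟨c,hc⟩ => ⟨c, by omega⟩⟩, Nat.dvd_div_iff_mul_dvd hdvd, Nat.dvd_div_iff_mul_dvd h2q, mul_comm]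
end

section
/- Let q be an odd prime power, m > 1 dividing q+1, β primitive in F_{q^2}, ω = β^{q-1}. For 0 ≤ t_1 < t_2 ≤ q, the elements ω^{t_1} and ω^{t_2} satisfy: ω^{t_2} - ω^{t_1} is an m-th power in F_{q^2}^* if and only if (q+1)/2 - (t_1 + t_2) ≡ 0 (mod m). -/
/-- For `ω = β^{q-1}` and `0 ≤ t₁ < t₂ ≤ q`, the difference
`ω^{t₂} - ω^{t₁}` is an `m`-th power in `F_{q^2}^*` iff
`(q+1)/2 - (t₁ + t₂) ≡ 0 (mod m)`. -/
theorem oval_adjacency_criterion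
    (q m : ℕ) (hq : ∃ p n : ℕ, p.Prime ∧ Odd p ∧ 0 < n ∧ q = p ^ n)
    (hm : 1 < m) (hdvd : m ∣ q + 1)
    (F : Type*) [Field F] [Fintype F] (hF : Fintype.card F = q ^ 2)
    (β : Fˣ) (hβ : ∀ u : Fˣ, u ∈ Subgroup.zpowers β)
    (t₁ t₂ : ℕ) (h12 : t₁ < t₂) (h2q : t₂ ≤ q) :
    (∃ δ : Fˣ, ((δ : F)) ^ m = (((β ^ (q - 1)) ^ t₂ : Fˣ) : F) - (((β ^ (q - 1)) ^ t₁ : Fˣ) : F)) ↔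
      (m : ℤ) ∣ ((((q + 1) / 2 : ℕ) : ℤ) - ((t₁ : ℤ) + (t₂ : ℤ))) := by
  classical
  obtain ⟨p, n, hp, hpodd, hn, rfl⟩ := hq
  set q := p ^ n with hqdef
  haveI : Fact p.Prime := ⟨hp⟩
  have hp3 : 3 ≤ p := by
    have := hp.two_le; rcases hpodd with ⟨k, hk⟩; omega
  have hq3 : 3 ≤ q := le_trans hp3 (Nat.le_self_pow hn.ne' p)
  have hqodd : Odd q := hpodd.pow
  -- characteristic
  have hchar : CharP F p := by
    have h0 : ((q ^ 2 : ℕ) : F) = 0 := by rw [← hF]; exact FiniteField.cast_card_eq_zero F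
    have hpp := CharP.char_is_prime F (ringChar F)
    have h1 : ringChar F ∣ q ^ 2 := (CharP.cast_eq_zero_iff F (ringChar F) _).mp h0
    have h2 : ringChar F ∣ p := hpp.dvd_of_dvd_pow (by rwa [hqdef, ← pow_mul] at h1)
    have h3 : ringChar F = p := ((Nat.prime_dvd_prime_iff_eq hpp hp).mp h2)
    rw [← h3]; exact ringChar.charP F
  -- card of units
  have hcardU : Fintype.card Fˣ = q ^ 2 - 1 := by rw [Fintype.card_units, hF]
  have hordβ : orderOf β = q ^ 2 - 1 := by
    rw [orderOf_eq_card_of_forall_mem_zpowers hβ, Nat.card_eq_fintype_card, hcardU]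
  set ω : Fˣ := β ^ (q - 1) with hωdef
  have hfact : q ^ 2 - 1 = (q - 1) * (q + 1) := by
    zify [show 1 ≤ q ^ 2 by nlinarith, show 1 ≤ q by omega]; ring
  have hordω : orderOf ω = q + 1 := by
    rw [hωdef, orderOf_pow, hordβ, hfact, Nat.gcd_eq_right ⟨q + 1, rfl⟩,
      Nat.mul_div_cancel_left _ (by omega : 0 < q - 1)]
  have hω1 : ω ^ (q + 1) = 1 := by rw [← hordω]; exact pow_orderOf_eq_one ω
  have hωq : ω ^ q = ω⁻¹ := by
    refine eq_inv_of_mul_eq_one_left ?_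
    rw [← pow_succ]; exact hω1
  -- the difference is a unit
  have hne : ω ^ t₂ ≠ ω ^ t₁ := by
    intro h
    have h' : ω ^ (t₂ - t₁) * ω ^ t₁ = 1 * ω ^ t₁ := by
      rw [← pow_add, Nat.sub_add_cancel h12.le, h, one_mul]
    have h1 : ω ^ (t₂ - t₁) = 1 := mul_right_cancel h'
    have := Nat.le_of_dvd (by omega) (hordω ▸ orderOf_dvd_of_pow_eq_one h1)
    omega
  have hcne : ((ω ^ t₂ : Fˣ) : F) - ((ω ^ t₁ : Fˣ) : F) ≠ 0 := by
    intro h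
    exact hne (Units.ext (sub_eq_zero.mp h))
  set δ : Fˣ := Units.mk0 _ hcne with hδdef
  have hδval : (δ : F) = ((ω ^ t₂ : Fˣ) : F) - ((ω ^ t₁ : Fˣ) : F) := rfl
  -- -1 = ω ^ ((q+1)/2)
  have h2dvd : 2 ∣ q + 1 := by rcases hqodd with ⟨k, hk⟩; omega
  have hneg : ω ^ ((q + 1) / 2) = -1 := by
    have hx2 : (ω ^ ((q + 1) / 2)) ^ 2 = 1 := by
      rw [← pow_mul, Nat.div_mul_cancel h2dvd]; exact hω1
    have hx1 : ω ^ ((q + 1) / 2) ≠ 1 := by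
      intro h
      have := Nat.le_of_dvd (by omega) (hordω ▸ orderOf_dvd_of_pow_eq_one h)
      omega
    have hval : (((ω ^ ((q + 1) / 2) : Fˣ) : F) - 1) * (((ω ^ ((q + 1) / 2) : Fˣ) : F) + 1) = 0 := by
      have h2 : ((ω ^ ((q + 1) / 2) : Fˣ) : F) ^ 2 = 1 := by
        rw [← Units.val_pow_eq_pow_val, hx2, Units.val_one]
      linear_combination h2
    rcases mul_eq_zero.mp hval with h | h
    · exact absurd (Units.ext (by simpa [sub_eq_zero] using h)) hx1
    · exact Units.ext (by simpa using eq_neg_of_add_eq_zero_left h)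
  -- Frobenius computation: δ ^ (q-1) = -ω^{-(t₁+t₂)}
  have hωtU : ∀ t : ℕ, (ω ^ t) ^ q = (ω ^ t)⁻¹ := fun t => by
    rw [← pow_mul, mul_comm, pow_mul, hωq, inv_pow]
  have hδq : (δ : F) ^ q = (((ω ^ t₂)⁻¹ : Fˣ) : F) - (((ω ^ t₁)⁻¹ : Fˣ) : F) := by
    rw [hδval, hqdef, sub_pow_char_pow]
    rw [← Units.val_pow_eq_pow_val, ← Units.val_pow_eq_pow_val, ← hqdef, hωtU, hωtU]
  have hkey : δ ^ (q - 1) * ω ^ (t₁ + t₂) = -1 := by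
    have ha : ((ω : F)) ^ t₂ ≠ 0 := pow_ne_zero _ (Units.ne_zero ω)
    have hb : ((ω : F)) ^ t₁ ≠ 0 := pow_ne_zero _ (Units.ne_zero ω)
    have hδq' : (δ : F) ^ q = ((ω : F) ^ t₂)⁻¹ - ((ω : F) ^ t₁)⁻¹ := by
      rw [hδq]; push_cast [Units.val_inv_eq_inv_val, Units.val_pow_eq_pow_val]; ring
    have hδval' : (δ : F) = (ω : F) ^ t₂ - (ω : F) ^ t₁ := by
      rw [hδval]; push_cast [Units.val_pow_eq_pow_val]; ring
    have hmulF : (δ : F) ^ (q - 1) * ((ω : F) ^ t₁ * (ω : F) ^ t₂) * (δ : F)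
        = -1 * (δ : F) := by
      have h1 : (δ : F) ^ (q - 1) * (δ : F) = (δ : F) ^ q := by
        rw [← pow_succ, Nat.sub_add_cancel (by omega : 1 ≤ q)]
      have h2 : (δ : F) ^ (q - 1) * ((ω : F) ^ t₁ * (ω : F) ^ t₂) * (δ : F)
          = (δ : F) ^ q * ((ω : F) ^ t₁ * (ω : F) ^ t₂) := by
        rw [← h1]; ring
      rw [h2, hδq', hδval']
      calc (((ω : F) ^ t₂)⁻¹ - ((ω : F) ^ t₁)⁻¹) * ((ω : F) ^ t₁ * (ω : F) ^ t₂)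
          = (ω : F) ^ t₁ * (((ω : F) ^ t₂)⁻¹ * (ω : F) ^ t₂)
              - (((ω : F) ^ t₁)⁻¹ * (ω : F) ^ t₁) * (ω : F) ^ t₂ := by ring
        _ = -1 * ((ω : F) ^ t₂ - (ω : F) ^ t₁) := by
            rw [inv_mul_cancel₀ ha, inv_mul_cancel₀ hb]; ring
    have hmul : δ ^ (q - 1) * ω ^ (t₁ + t₂) * δ = -1 * δ := by
      apply Units.ext
      push_cast [Units.val_mul, Units.val_pow_eq_pow_val, Units.val_neg, Units.val_one, pow_add]
      exact hmulF
    exact mul_right_cancel hmul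
  -- main exponent identity
  set e : ℤ := (((q + 1) / 2 : ℕ) : ℤ) - ((t₁ : ℤ) + (t₂ : ℤ)) with hedef
  have hkey2 : δ ^ (q - 1) = ω ^ e := by
    have he : e = (((q + 1) / 2 : ℕ) : ℤ) + (-((t₁ + t₂ : ℕ) : ℤ)) := by
      rw [hedef]; push_cast; ring
    rw [he, zpow_add, zpow_natCast, zpow_neg, zpow_natCast, hneg]
    calc δ ^ (q - 1) = (δ ^ (q - 1) * ω ^ (t₁ + t₂)) * (ω ^ (t₁ + t₂))⁻¹ := by group
    _ = -1 * (ω ^ (t₁ + t₂))⁻¹ := by rw [hkey]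
  obtain ⟨k, hk⟩ := hdvd
  have hkpos : 0 < k := by nlinarith
  have hNfact : q ^ 2 - 1 = m * ((q - 1) * k) := by rw [hfact, hk]; ring
  constructor
  · rintro ⟨d, hd⟩
    have hd0 : (d : F) ≠ 0 := Units.ne_zero d
    have hγm : d ^ m = δ := by
      apply Units.ext
      rw [Units.val_pow_eq_pow_val, hd, hδval]
    have hδpow : δ ^ ((q - 1) * k) = 1 := by
      rw [← hγm, ← pow_mul]
      have : m * ((q - 1) * k) = Fintype.card Fˣ := by rw [hcardU, hNfact]
      rw [this]; exact pow_card_eq_one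
    have hzpow : ω ^ (e * (k : ℤ)) = 1 := by
      rw [zpow_mul, ← hkey2, zpow_natCast, ← pow_mul]
      exact hδpow
    have hdvd1 : ((q + 1 : ℕ) : ℤ) ∣ e * (k : ℤ) := by
      rw [← hordω]; exact orderOf_dvd_iff_zpow_eq_one.mpr hzpow
    have : (m : ℤ) * (k : ℤ) ∣ e * (k : ℤ) := by
      rw [← Nat.cast_mul, ← hk]; exact hdvd1
    exact (mul_dvd_mul_iff_right (by exact_mod_cast hkpos.ne' : (k : ℤ) ≠ 0)).mp this
  · rintro ⟨j, hj⟩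
    have hδpow : δ ^ ((q - 1) * k) = 1 := by
      have : (δ ^ (q - 1)) ^ k = ω ^ (e * (k : ℤ)) := by
        rw [hkey2, ← zpow_natCast (ω ^ e), ← zpow_mul]
      rw [pow_mul, this, hj]
      have : (m : ℤ) * j * (k : ℤ) = ((q + 1 : ℕ) : ℤ) * j := by push_cast [hk]; ring
      rw [this, zpow_mul, zpow_natCast, hω1, one_zpow]
    obtain ⟨s, hs⟩ := Subgroup.mem_zpowers_iff.mp (hβ δ)
    have hβpow : β ^ (s * (((q - 1) * k : ℕ) : ℤ)) = 1 := by
      rw [zpow_mul, hs, zpow_natCast, hδpow]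
    have hdvd2 : ((q ^ 2 - 1 : ℕ) : ℤ) ∣ s * (((q - 1) * k : ℕ) : ℤ) := by
      rw [← hordβ]; exact orderOf_dvd_iff_zpow_eq_one.mpr hβpow
    have hdvd3 : (m : ℤ) * (((q - 1) * k : ℕ) : ℤ) ∣ s * (((q - 1) * k : ℕ) : ℤ) := by
      rw [← Nat.cast_mul, ← hNfact]; exact hdvd2
    have hKne : (((q - 1) * k : ℕ) : ℤ) ≠ 0 := by
      have : 0 < (q - 1) * k := Nat.mul_pos (by omega) hkpos
      exact_mod_cast this.ne'
    obtain ⟨i, hi⟩ := (mul_dvd_mul_iff_right hKne).mp hdvd3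
    refine ⟨β ^ i, ?_⟩
    have : (β ^ i) ^ m = δ := by
      rw [← zpow_natCast (β ^ i), ← zpow_mul, mul_comm, ← hi, hs]
    rw [← Units.val_pow_eq_pow_val, this, hδval]
end

section
/- Let q be an odd prime power, m > 1 dividing q+1, β primitive in F_{q^2}, ω = β^{q-1}, and α with α^2 = d a non-square in F_q^*. For 0 ≤ t_1 < t_2 ≤ q, the element αω^{t_2} - αω^{t_1} is an m-th power in F_{q^2}^* if and only if t_1 + t_2 ≡ 0 (mod m). -/
/-- For `ω = β^{q-1}` and `α` with `α^2 = d` a non-square in `F_q^*`,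
and `0 ≤ t₁ < t₂ ≤ q`, the element `αω^{t₂} - αω^{t₁}` is an `m`-th power in
`F_{q^2}^*` iff `t₁ + t₂ ≡ 0 (mod m)`. -/
theorem alpha_oval_adjacency_criterion
    (q m : ℕ) (hq : ∃ p n : ℕ, p.Prime ∧ Odd p ∧ 0 < n ∧ q = p ^ n)
    (hm : 1 < m) (hdvd : m ∣ q + 1)
    (F : Type*) [Field F] [Fintype F] (hF : Fintype.card F = q ^ 2)
    (β : Fˣ) (hβ : ∀ u : Fˣ, u ∈ Subgroup.zpowers β)
    (d α : F) (hdq : d ^ q = d) (hd0 : d ≠ 0)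
    (hns : ¬∃ s : F, s ^ q = s ∧ s ^ 2 = d) (hα : α ^ 2 = d)
    (t₁ t₂ : ℕ) (h12 : t₁ < t₂) (h2q : t₂ ≤ q) :
    (∃ δ : Fˣ, ((δ : F)) ^ m =
        α * (((β ^ (q - 1)) ^ t₂ : Fˣ) : F) - α * (((β ^ (q - 1)) ^ t₁ : Fˣ) : F)) ↔
      m ∣ (t₁ + t₂) := by
  classical
  obtain ⟨p, n, hp, hpodd, hn, hqpn⟩ := hq
  have hq3 : 3 ≤ q := by
    have hp3 : 3 ≤ p := hp.two_le.lt_of_ne (by rintro rfl; exact (Nat.not_odd_iff_even.2 even_two) hpodd) 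
    calc 3 ≤ p := hp3
    _ = p ^ 1 := (pow_one p).symm
    _ ≤ p ^ n := Nat.pow_le_pow_right hp.pos hn
    _ = q := hqpn.symm
  -- characteristic
  haveI hFp : Fact p.Prime := ⟨hp⟩
  haveI : CharP F p := by
    have hr : (ringChar F).Prime := CharP.char_is_prime F (ringChar F)
    obtain ⟨s, -, hs⟩ := FiniteField.card F (ringChar F)
    have hdvdp : ringChar F ∣ p := by
      have : ringChar F ∣ p ^ (2 * n) := by
        have hcard : Fintype.card F = p ^ (2 * n) := by
          rw [hF, hqpn, ← pow_mul, mul_comm]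
        rw [← hcard, hs]
        exact dvd_pow_self _ s.pos.ne'
      exact hr.dvd_of_dvd_pow this
    have : ringChar F = p := (Nat.prime_dvd_prime_iff_eq hr hp).mp hdvdp
    rw [← this]; exact ringChar.charP F
  -- order of β
  have hcardU : Fintype.card Fˣ = q ^ 2 - 1 := by rw [Fintype.card_units, hF]
  have hordβ : orderOf β = q ^ 2 - 1 := by
    rw [orderOf_eq_card_of_forall_mem_zpowers hβ, Nat.card_eq_fintype_card, hcardU]
  have hq2 : q ^ 2 - 1 = (q - 1) * (q + 1) := by
    have := Nat.sq_sub_sq q 1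
    simpa [mul_comm] using this
  -- ω and its order
  set w : Fˣ := β ^ (q - 1) with hw
  have hordw : orderOf w = q + 1 := by
    rw [hw, orderOf_pow, hordβ, hq2, Nat.gcd_eq_right (dvd_mul_right _ _),
      Nat.mul_div_cancel_left _ (by omega)]
  have hwq1 : w ^ (q + 1) = 1 := by rw [← hordw]; exact pow_orderOf_eq_one w
  -- α is nonzero and α^q = -α
  have hα0 : α ≠ 0 := fun h => hd0 (by rw [← hα, h]; ring)
  have hαq : α ^ q = -α := by
    have hsq : (α ^ q) ^ 2 = α ^ 2 := by
      rw [← pow_mul, mul_comm, pow_mul, hα, hdq]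
    have : (α ^ q - α) * (α ^ q + α) = 0 := by ring_nf; linear_combination hsq
    rcases mul_eq_zero.mp this with h | h
    · exact absurd ⟨α, sub_eq_zero.mp h, hα⟩ hns
    · exact eq_neg_of_add_eq_zero_left h
  have hq3' : (3:ℤ) ≤ (q:ℤ) := by exact_mod_cast hq3
  -- coercion facts for w
  have hwcoe1 : ((w : F)) ^ (q + 1) = 1 := by
    rw [← Units.val_pow_eq_pow_val, hwq1, Units.val_one]
  have hWt : ∀ a b : ℕ, ((w : F)) ^ (a * (q + 1) + b) = ((w : F)) ^ b := by
    intro a b; rw [pow_add, pow_mul', hwcoe1, one_pow, one_mul]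
  -- the element x
  set x : F := α * ((w : F)) ^ t₂ - α * ((w : F)) ^ t₁ with hxdef
  have hwne : ((w : F)) ^ t₂ ≠ ((w : F)) ^ t₁ := by
    intro h
    have hu : w ^ t₂ = w ^ t₁ := Units.ext (by
      rw [Units.val_pow_eq_pow_val, Units.val_pow_eq_pow_val]; exact h)
    rw [pow_eq_pow_iff_modEq, hordw] at hu
    have hd : (q + 1) ∣ t₂ - t₁ := (Nat.modEq_iff_dvd' (le_of_lt h12)).mp hu.symm
    have := Nat.le_of_dvd (by omega) hd
    omega
  have hx0 : x ≠ 0 := by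
    have hx' : x = α * (((w : F)) ^ t₂ - ((w : F)) ^ t₁) := by rw [hxdef]; ring
    rw [hx']
    exact mul_ne_zero hα0 (sub_ne_zero.mpr hwne)
  -- the key identity x^q * w^(t₁+t₂) = x
  have hkey : x ^ q * ((w : F)) ^ (t₁ + t₂) = x := by
    have h1 : x ^ q = α ^ q * (((w : F)) ^ (t₂ * q)) - α ^ q * (((w : F)) ^ (t₁ * q)) := by
      rw [hxdef, hqpn, sub_pow_char_pow, mul_pow, mul_pow, ← pow_mul, ← pow_mul, ← hqpn]
    have e2 : ((w : F)) ^ (t₂ * q) * ((w : F)) ^ (t₁ + t₂) = ((w : F)) ^ t₁ := by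
      rw [← pow_add, show t₂ * q + (t₁ + t₂) = t₂ * (q + 1) + t₁ by ring, hWt]
    have e1 : ((w : F)) ^ (t₁ * q) * ((w : F)) ^ (t₁ + t₂) = ((w : F)) ^ t₂ := by
      rw [← pow_add, show t₁ * q + (t₁ + t₂) = t₁ * (q + 1) + t₂ by ring, hWt]
    rw [h1, hαq, hxdef]
    linear_combination (-α) * e2 + α * e1
  -- x as a power of β
  obtain ⟨xu, hxu⟩ := isUnit_iff_ne_zero.mpr hx0
  obtain ⟨k, hk⟩ := mem_powers_iff_mem_zpowers.mpr (hβ xu)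
  dsimp only at hk
  have hkeyu : xu ^ q * w ^ (t₁ + t₂) = xu := Units.ext (by
    rw [Units.val_mul, Units.val_pow_eq_pow_val, Units.val_pow_eq_pow_val, hxu]
    exact hkey)
  have hβeq : β ^ (k * q + (q - 1) * (t₁ + t₂)) = β ^ k := by
    rw [pow_add, pow_mul, pow_mul, hk, ← hw]
    exact hkeyu
  have hmod : (k * q + (q - 1) * (t₁ + t₂)) ≡ k [MOD q ^ 2 - 1] := by
    rw [← hordβ]; exact pow_eq_pow_iff_modEq.mp hβeq
  -- deduce (q+1) ∣ k + (t₁+t₂) over ℤ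
  have hq1dvd : ((q : ℤ) + 1) ∣ ((k : ℤ) + ((t₁ + t₂ : ℕ) : ℤ)) := by
    have h := Nat.ModEq.dvd hmod
    have h2 : ((q : ℤ) - 1) * ((q : ℤ) + 1) ∣ ((q : ℤ) - 1) * ((k : ℤ) + ((t₁ + t₂ : ℕ) : ℤ)) := by
      have e2 : (((q ^ 2 - 1 : ℕ)) : ℤ) = ((q : ℤ) - 1) * ((q : ℤ) + 1) := by
        push_cast [Nat.cast_sub (show 1 ≤ q ^ 2 by nlinarith)]
        ring
      have e : ((q : ℤ) - 1) * ((k : ℤ) + ((t₁ + t₂ : ℕ) : ℤ)) =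
          -(((k : ℕ) : ℤ) - ((k * q + (q - 1) * (t₁ + t₂) : ℕ) : ℤ)) := by
        push_cast [Nat.cast_sub (show 1 ≤ q by omega)]
        ring
      rw [e, ← e2]
      exact dvd_neg.mpr h
    exact (mul_dvd_mul_iff_left (show ((q : ℤ) - 1) ≠ 0 by omega)).mp h2
  -- m-th power criterion in terms of k
  have hmdvdN : m ∣ q ^ 2 - 1 := by rw [hq2]; exact Dvd.dvd.mul_left hdvd _
  have hmk : (∃ δ : Fˣ, ((δ : F)) ^ m = x) ↔ m ∣ k := by
    constructor
    · rintro ⟨δ, hδ⟩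
      obtain ⟨l, hl⟩ := mem_powers_iff_mem_zpowers.mpr (hβ δ)
      dsimp only at hl
      have hδu : δ ^ m = xu := Units.ext (by
        rw [Units.val_pow_eq_pow_val, hδ, hxu])
      have hlm : β ^ (l * m) = β ^ k := by rw [pow_mul, hl, hδu, hk]
      have hmm : l * m ≡ k [MOD q ^ 2 - 1] := by
        rw [← hordβ]; exact pow_eq_pow_iff_modEq.mp hlm
      have hmm2 : l * m ≡ k [MOD m] := hmm.of_dvd hmdvdN
      have h0 : l * m % m = k % m := hmm2
      rw [Nat.mul_mod_left] at h0
      exact Nat.dvd_of_mod_eq_zero h0.symm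
    · rintro ⟨j, rfl⟩
      refine ⟨β ^ j, ?_⟩
      rw [← Units.val_pow_eq_pow_val, ← pow_mul, mul_comm j m, hk, hxu]
  -- final equivalence
  have hgoal : (α * ((w ^ t₂ : Fˣ) : F) - α * ((w ^ t₁ : Fˣ) : F)) = x := by
    rw [hxdef]
    push_cast
    ring
  have hmq1 : (m : ℤ) ∣ ((q : ℤ) + 1) := by exact_mod_cast Int.natCast_dvd_natCast.mpr hdvd
  have hmkt : (m : ℤ) ∣ ((k : ℤ) + ((t₁ + t₂ : ℕ) : ℤ)) := dvd_trans hmq1 hq1dvd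
  rw [show α * ((w ^ t₂ : Fˣ) : F) - α * ((w ^ t₁ : Fˣ) : F) = x from hgoal, hmk]
  constructor <;> intro h
  · have hk' : (m : ℤ) ∣ (k : ℤ) := Int.natCast_dvd_natCast.mpr h
    have : (m : ℤ) ∣ ((t₁ + t₂ : ℕ) : ℤ) := (dvd_add_right hk').mp hmkt
    exact_mod_cast this
  · have ht' : (m : ℤ) ∣ ((t₁ + t₂ : ℕ) : ℤ) := Int.natCast_dvd_natCast.mpr h
    have : (m : ℤ) ∣ (k : ℤ) := (dvd_add_left ht').mp hmkt
    exact_mod_cast this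
end

section
/- Let q be an odd prime power, m ≥ 2 dividing q+1, ω = β^{q-1}, and write an arbitrary element of Q as ω^t with t = me + i, 0 ≤ i ≤ m-1. Then ω^t is an m-th power in F_{q^2}^* if and only if i = 0, or m is even and i = m/2. -/
/-- Write `ω = β^{q-1}` and `t = m*e + i` with `0 ≤ i ≤ m-1`. Then `ω^t`
is an `m`-th power in `F_{q^2}^*` iff `i = 0`, or `m` is even and `i = m/2`. -/
theorem oval_element_mth_power_iff
    (q m : ℕ) (hq : ∃ p n : ℕ, p.Prime ∧ Odd p ∧ 0 < n ∧ q = p ^ n)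
    (hm : 2 ≤ m) (hdvd : m ∣ q + 1)
    (F : Type*) [Field F] [Fintype F] (hF : Fintype.card F = q ^ 2)
    (β : Fˣ) (hβ : ∀ u : Fˣ, u ∈ Subgroup.zpowers β)
    (t e i : ℕ) (ht : t = m * e + i) (hi : i ≤ m - 1) :
    (∃ δ : Fˣ, δ ^ m = (β ^ (q - 1)) ^ t) ↔ (i = 0 ∨ (m % 2 = 0 ∧ i = m / 2)) := by
  obtain ⟨p, n, hp, hpodd, hn, hqpn⟩ := hq
  have hq1 : 1 ≤ q := by
    subst hqpn; exact Nat.one_le_pow _ _ hp.pos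
  -- order of β
  have horder : orderOf β = q ^ 2 - 1 := by
    classical
    rw [orderOf_eq_card_of_forall_mem_zpowers hβ, Nat.card_eq_fintype_card,
      Fintype.card_units, hF]
  have hmN : m ∣ q ^ 2 - 1 := by
    refine hdvd.trans ⟨q - 1, ?_⟩
    obtain ⟨r, rfl⟩ : ∃ r, q = r + 1 := ⟨q - 1, by omega⟩
    have h1 : (r + 1) ^ 2 = r * r + 2 * r + 1 := by ring
    have h2 : (r + 1 + 1) * (r + 1 - 1) = r * r + 2 * r := by
      simp; ring
    omega
  -- the key group-theoretic reduction
  have key : (∃ δ : Fˣ, δ ^ m = (β ^ (q - 1)) ^ t) ↔ m ∣ (q - 1) * t := by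
    constructor
    · rintro ⟨δ, hδ⟩
      obtain ⟨s, hs0⟩ := hβ δ
      have hs : β ^ s = δ := hs0
      have h1 : β ^ (s * (m : ℤ)) = β ^ (((q - 1) * t : ℕ) : ℤ) := by
        rw [zpow_mul, hs, zpow_natCast, hδ, ← pow_mul, zpow_natCast]
      have h2 : β ^ (s * (m : ℤ) - (((q - 1) * t : ℕ) : ℤ)) = 1 := by
        rw [zpow_sub, h1]; simp
      have h3 : ((orderOf β : ℕ) : ℤ) ∣ s * (m : ℤ) - (((q - 1) * t : ℕ) : ℤ) :=
        orderOf_dvd_iff_zpow_eq_one.mpr h2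
      rw [horder] at h3
      have h4 : (m : ℤ) ∣ s * (m : ℤ) - (((q - 1) * t : ℕ) : ℤ) :=
        (Int.natCast_dvd_natCast.mpr hmN).trans h3
      have h5 : (m : ℤ) ∣ (((q - 1) * t : ℕ) : ℤ) := by
        have := dvd_sub (Dvd.intro_left s rfl) h4
        simpa using this
      exact_mod_cast h5
    · rintro ⟨c, hc⟩
      refine ⟨β ^ c, ?_⟩
      rw [← pow_mul, ← pow_mul, Nat.mul_comm c m, ← hc]
  rw [key]
  -- arithmetic part
  have e1 : (q - 1) * t = m * ((q - 1) * e) + (q - 1) * i := by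
    subst ht; ring_nf
  have h6 : m ∣ (q - 1) * t ↔ m ∣ (q - 1) * i := by
    rw [e1]; exact ⟨fun h => (Nat.dvd_add_right ⟨_, rfl⟩).mp h,
      fun h => Dvd.dvd.add ⟨_, rfl⟩ h⟩
  have hq1i : m ∣ (q + 1) * i := Dvd.dvd.mul_right hdvd i
  have h7 : m ∣ (q - 1) * i ↔ m ∣ 2 * i := by
    constructor
    · intro h
      have := Nat.dvd_sub hq1i h
      have e2 : (q + 1) * i - (q - 1) * i = 2 * i := by
        have : (q + 1) * i = (q - 1) * i + 2 * i := by
          have hq' : q + 1 = (q - 1) + 2 := by omega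
          rw [hq', Nat.add_mul]
        omega
      rwa [e2] at this
    · intro h
      have := Nat.dvd_sub hq1i h
      have e2 : (q + 1) * i - 2 * i = (q - 1) * i := by
        have : (q + 1) * i = (q - 1) * i + 2 * i := by
          have hq' : q + 1 = (q - 1) + 2 := by omega
          rw [hq', Nat.add_mul]
        omega
      rwa [e2] at this
  rw [h6, h7]
  constructor
  · rintro ⟨c, hc⟩
    have hlt : 2 * i < 2 * m := by omega
    have hc2 : c < 2 := by
      rcases Nat.lt_or_ge c 2 with h | h
      · exact h
      · exfalso; nlinarith
    interval_cases c <;> omega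
  · rintro (rfl | ⟨hme, rfl⟩)
    · exact ⟨0, by omega⟩
    · exact ⟨1, by omega⟩
end

section
/- Let m ≥ 2 divide (q+1)/2, where q is an odd prime power, and let m be odd. Write Q = ⟨ω⟩ with ω = β^{q-1} and Q_i = ω^i⟨ω^m⟩. Then Q_0 is a clique in GP(q^2,m), each Q_i with 1 ≤ i ≤ m-1 is an independent set, and for distinct i_1 < i_2 in {0,...,m-1}, every element of Q_{i_1} is adjacent to every element of Q_{i_2} if i_1 + i_2 ≡ 0 (mod m), and no element of Q_{i_1} is adjacent to any element of Q_{i_2} otherwise. -/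
/-- The coset `Q_i = ω^i ⟨ω^m⟩` of the subgroup `Q_0` of the order-`(q+1)` subgroup
`Q = ⟨ω⟩`, `ω = β^{q-1}`, viewed as a set of field elements. -/
def Qcoset (q m : ℕ) {F : Type*} [Field F] (β : Fˣ) (i : ℕ) : Set F :=
  {x | ∃ k : ℕ, x = (((β ^ (q - 1)) ^ (i + m * k) : Fˣ) : F)}

/-- Adjacency in `GP(q^2, m)`: the difference is a nonzero `m`-th power. -/
def AdjGP (m : ℕ) {F : Type*} [Field F] (x y : F) : Prop :=
  ∃ δ : Fˣ, ((δ : F)) ^ m = x - y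

lemma beta_zpow_eq_one_iff (q : ℕ) {F : Type*} [Field F] [Fintype F]
    (hF : Fintype.card F = q ^ 2)
    (β : Fˣ) (hβ : ∀ u : Fˣ, u ∈ Subgroup.zpowers β) (a : ℤ) :
    β ^ a = 1 ↔ ((q ^ 2 - 1 : ℕ) : ℤ) ∣ a := by
  have h1 : orderOf β = q ^ 2 - 1 := by
    rw [orderOf_eq_card_of_forall_mem_zpowers hβ, Nat.card_units,
      Nat.card_eq_fintype_card, hF]
  rw [← h1]
  exact orderOf_dvd_iff_zpow_eq_one.symm

lemma nat_fac (q : ℕ) (hq3 : 3 ≤ q) : q ^ 2 - 1 = (q - 1) * (q + 1) := by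
  obtain ⟨c, rfl⟩ : ∃ c, q = c + 1 := ⟨q - 1, by omega⟩
  simp only [Nat.add_sub_cancel]
  have : (c + 1) ^ 2 = c * (c + 1 + 1) + 1 := by ring
  omega

/-- `-1 = β^((q²-1)/2)` -/
lemma beta_half (q : ℕ) (hq3 : 3 ≤ q) (hqo : Odd q) {F : Type*} [Field F] [Fintype F]
    (hF : Fintype.card F = q ^ 2)
    (β : Fˣ) (hβ : ∀ u : Fˣ, u ∈ Subgroup.zpowers β) :
    β ^ (((q - 1) * ((q + 1) / 2) : ℕ) : ℤ) = (-1 : Fˣ) := by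
  set h : ℕ := (q - 1) * ((q + 1) / 2) with hh
  have h2 : 2 * ((q + 1) / 2) = q + 1 := by
    obtain ⟨c, hc⟩ := hqo; omega
  have hN : q ^ 2 - 1 = 2 * h := by
    have h3 : 2 * h = (q - 1) * (2 * ((q + 1) / 2)) := by rw [hh]; ring
    rw [nat_fac q hq3, h3, h2]
  have hpos : 0 < h := by
    have : 2 ≤ (q + 1) / 2 := by omega
    have : 2 ≤ q - 1 := by omega
    positivity
  have hsq : (β ^ ((h : ℕ) : ℤ)) * (β ^ ((h : ℕ) : ℤ)) = 1 := by
    rw [← zpow_add]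
    rw [beta_zpow_eq_one_iff q hF β hβ]
    rw [hN]; push_cast; ring_nf; exact ⟨1, by ring⟩
  have hne1 : β ^ ((h : ℕ) : ℤ) ≠ 1 := by
    intro hcon
    rw [beta_zpow_eq_one_iff q hF β hβ, hN] at hcon
    have := Int.le_of_dvd (by exact_mod_cast hpos) hcon
    omega
  -- now x * x = 1, x ≠ 1 implies x = -1, at field level
  set x : Fˣ := β ^ ((h : ℕ) : ℤ) with hx
  have hfield : (x : F) * (x : F) = 1 := by
    rw [← Units.val_mul, hsq, Units.val_one]
  rcases mul_self_eq_one_iff.mp hfield with hc | hc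
  · exact absurd (Units.ext hc) hne1
  · apply Units.ext
    rw [hc]; simp


lemma key_both (q m p n : ℕ) (hp : p.Prime) (hpo : Odd p) (hn : 0 < n) (hqpn : q = p ^ n)
    (hm : 2 ≤ m) (hdvd : m ∣ (q + 1) / 2)
    {F : Type*} [Field F] [Fintype F] (hF : Fintype.card F = q ^ 2)
    (β : Fˣ) (hβ : ∀ u : Fˣ, u ∈ Subgroup.zpowers β) (s t : ℕ) :
    ((((β ^ (q - 1)) ^ s : Fˣ) : F) = (((β ^ (q - 1)) ^ t : Fˣ) : F) → (m : ℤ) ∣ (s : ℤ) - t) ∧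
    ((((β ^ (q - 1)) ^ s : Fˣ) : F) ≠ (((β ^ (q - 1)) ^ t : Fˣ) : F) →
      (AdjGP m ((((β ^ (q - 1)) ^ s : Fˣ)) : F) (((β ^ (q - 1)) ^ t : Fˣ) : F) ↔
        (m : ℤ) ∣ (s : ℤ) + t)) := by
  have hp3 : 3 ≤ p := by
    rcases hpo with ⟨c, hc⟩
    have := hp.two_le; omega
  have hq3 : 3 ≤ q := le_trans hp3 (hqpn ▸ Nat.le_self_pow hn.ne' p)
  have hqo : Odd q := hqpn ▸ hpo.pow
  set e : ℤ := (q : ℤ) - 1 with he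
  set c : ℤ := (((q + 1) / 2 : ℕ) : ℤ) with hcdef
  have h2 : 2 * c = (q : ℤ) + 1 := by
    rcases hqo with ⟨r, hr⟩
    simp only [hcdef]; omega
  have hepos : 0 < e := by omega
  have hN : ((q ^ 2 - 1 : ℕ) : ℤ) = e * (2 * c) := by
    rw [nat_fac q hq3]
    push_cast [show 1 ≤ q by omega]
    linear_combination ((q : ℤ) - 1) * h2.symm
  have hmc : (m : ℤ) ∣ c := by
    simp only [hcdef]
    exact_mod_cast Int.natCast_dvd_natCast.mpr hdvd
  have hdivN : ∀ a : ℤ, β ^ a = 1 ↔ e * (2 * c) ∣ a := by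
    intro a; rw [← hN]; exact beta_zpow_eq_one_iff q hF β hβ a
  have hc1 : ((q - 1 : ℕ) : ℤ) = e := by omega
  have hωpow : ∀ j : ℕ, ((β ^ (q - 1)) ^ j : Fˣ) = β ^ (e * j) := by
    intro j
    calc (β ^ (q - 1)) ^ j = (β ^ ((q - 1 : ℕ) : ℤ)) ^ (j : ℤ) := by
          rw [zpow_natCast, zpow_natCast]
      _ = β ^ (e * j) := by rw [hc1, ← zpow_mul]
  constructor
  · -- equality case
    intro heq
    have hU : ((β ^ (q - 1)) ^ s : Fˣ) = (β ^ (q - 1)) ^ t := Units.ext heq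
    rw [hωpow, hωpow] at hU
    have h1 : β ^ (e * s - e * t) = 1 := by
      rw [zpow_sub, hU, mul_inv_cancel]
    obtain ⟨k, hk⟩ := (hdivN _).mp h1
    have hk2 : (s : ℤ) - t = 2 * c * k := by
      apply mul_left_cancel₀ hepos.ne'
      linear_combination hk
    rw [hk2]
    exact Dvd.dvd.mul_right (hmc.mul_left 2) k
  · -- adjacency case
    intro hne
    haveI hpf : Fact p.Prime := ⟨hp⟩
    have hpd : p ∣ Fintype.card F := by
      rw [hF, hqpn, ← pow_mul]
      exact dvd_pow_self p (by omega)
    haveI : CharP F p := by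
      have h1 : p ∣ ringChar F := (prime_dvd_char_iff_dvd_card p).mpr hpd
      have h2 : (ringChar F).Prime := CharP.char_is_prime F (ringChar F)
      have h3 : ringChar F = p := ((Nat.prime_dvd_prime_iff_eq hp h2).mp h1).symm
      exact h3 ▸ ringChar.charP F
    set xs : F := (((β ^ (q - 1)) ^ s : Fˣ) : F) with hxs
    set xt : F := (((β ^ (q - 1)) ^ t : Fˣ) : F) with hxt
    set u : F := xs - xt with hudef
    have hu : u ≠ 0 := sub_ne_zero.mpr hne
    set U : Fˣ := Units.mk0 u hu with hUdef
    have hUval : (U : F) = u := rfl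
    obtain ⟨E, hE⟩ := Subgroup.mem_zpowers_iff.mp (hβ U)
    have hfr : u ^ q = xs ^ q - xt ^ q := by
      have := sub_pow_char_pow (p := p) (n := n) xs xt
      rwa [← hqpn] at this
    set b : F := (β : F) with hbdef
    have hb : b ≠ 0 := Units.ne_zero β
    -- (ω^j)^q = ω^{-j} at the field level
    have hinv : ∀ j : ℕ, (((β ^ (q - 1)) ^ j : Fˣ) : F) ^ q = b ^ (-(e * j)) := by
      intro j
      have h1 : ((β ^ (q - 1)) ^ j : Fˣ) ^ q = β ^ (-(e * j)) := by
        rw [hωpow j, ← zpow_natCast (β ^ (e * (j : ℤ))) q, ← zpow_mul]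
        have hone : β ^ (e * (j : ℤ) * q) * β ^ (e * (j : ℤ)) = 1 := by
          rw [← zpow_add]
          apply (hdivN _).mpr
          exact ⟨j, by linear_combination (e * (j : ℤ)) * h2.symm⟩
        have h3 := eq_inv_of_mul_eq_one_left hone
        rwa [← zpow_neg] at h3
      rw [← Units.val_pow_eq_pow_val, h1, Units.val_zpow_eq_zpow_val]
    have hxsb : xs = b ^ (e * s) := by
      rw [hxs, hωpow s, Units.val_zpow_eq_zpow_val]
    have hxtb : xt = b ^ (e * t) := by
      rw [hxt, hωpow t, Units.val_zpow_eq_zpow_val]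
    have hkey : u ^ q * ((β ^ (e * ((s : ℤ) + t)) : Fˣ) : F) = -u := by
      rw [hfr, hinv s, hinv t, Units.val_zpow_eq_zpow_val, hudef, hxsb, hxtb, ← hbdef]
      rw [sub_mul, ← zpow_add₀ hb, ← zpow_add₀ hb]
      have e1 : -(e * (s : ℤ)) + e * ((s : ℤ) + t) = e * t := by ring
      have e2 : -(e * (t : ℤ)) + e * ((s : ℤ) + t) = e * s := by ring
      rw [e1, e2]; ring
    have hUkey : U ^ q * β ^ (e * ((s : ℤ) + t)) = -U := by
      apply Units.ext
      rw [Units.val_mul, Units.val_pow_eq_pow_val, Units.val_neg, hUval]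
      exact hkey
    rw [← hE] at hUkey
    have hA : β ^ (E * (q : ℤ) + e * ((s : ℤ) + t)) = -β ^ E := by
      rw [zpow_add, zpow_mul, zpow_natCast]
      exact hUkey
    have hneg1 : β ^ (E * e + e * ((s : ℤ) + t)) = -1 := by
      calc β ^ (E * e + e * ((s : ℤ) + t))
          = β ^ (E * (q : ℤ) + e * ((s : ℤ) + t)) * β ^ (-E) := by
            rw [← zpow_add]; congr 1; rw [he]; ring
        _ = -(β ^ E * β ^ (-E)) := by rw [hA, neg_mul]
        _ = -1 := by rw [← zpow_add]; simp
    have hhalf := beta_half q hq3 hqo hF β hβ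
    have hHc : (((q - 1) * ((q + 1) / 2) : ℕ) : ℤ) = e * c := by
      rw [Nat.cast_mul, hc1, hcdef]
    rw [hHc] at hhalf
    have hcong : β ^ (E * e + e * ((s : ℤ) + t) - e * c) = 1 := by
      rw [zpow_sub, hneg1, hhalf]
      simp
    obtain ⟨k, hk⟩ := (hdivN _).mp hcong
    have hk2 : E + (s : ℤ) + t - c = 2 * c * k := by
      apply mul_left_cancel₀ hepos.ne'
      linear_combination hk
    have hmEst : (m : ℤ) ∣ E + s + t := by
      have h4 : (m : ℤ) ∣ E + s + t - c := hk2 ▸ Dvd.dvd.mul_right (hmc.mul_left 2) k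
      have := dvd_add h4 hmc
      simpa using this
    have hmN : (m : ℤ) ∣ e * (2 * c) := Dvd.dvd.mul_left (hmc.mul_left 2) e
    constructor
    · rintro ⟨δ, hδ⟩
      have hδU : δ ^ m = U := by
        apply Units.ext
        rw [Units.val_pow_eq_pow_val, hUval]
        exact hδ
      obtain ⟨D, hD⟩ := Subgroup.mem_zpowers_iff.mp (hβ δ)
      rw [← hD, ← hE] at hδU
      have h5 : β ^ (D * m - E) = 1 := by
        rw [zpow_sub, ← zpow_natCast (β ^ D) m, ← zpow_mul] at *
        rw [hδU, mul_inv_cancel]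
      have h6 : (m : ℤ) ∣ D * m - E := (hmN).trans ((hdivN _).mp h5)
      have h7 : (m : ℤ) ∣ E := by
        have := dvd_sub (Dvd.dvd.mul_left ⟨1, by ring⟩ D) h6
        simpa using this
      have := dvd_sub hmEst h7
      have h8 : E + (s : ℤ) + t - E = (s : ℤ) + t := by ring
      rwa [h8] at this
    · intro hst
      have h7 : (m : ℤ) ∣ E := by
        have := dvd_sub hmEst hst
        have h8 : E + (s : ℤ) + t - ((s : ℤ) + t) = E := by ring
        rwa [h8] at this
      obtain ⟨k', hk'⟩ := h7
      refine ⟨β ^ k', ?_⟩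
      have h9 : (β ^ k') ^ m = U := by
        rw [← hE, ← zpow_natCast (β ^ k') m, ← zpow_mul]
        congr 1
        rw [hk']; ring
      rw [← Units.val_pow_eq_pow_val, h9, hUval]


/-- For odd `m ≥ 2` dividing `(q+1)/2`: `Q_0` is a clique in `GP(q^2,m)`,
each `Q_i` (`1 ≤ i ≤ m-1`) is independent, and for `i₁ < i₂ ≤ m-1` all edges between
`Q_{i₁}` and `Q_{i₂}` are present if `m ∣ i₁+i₂` and none otherwise. -/
theorem structure_of_Q_odd_case
    (q m : ℕ) (hq : ∃ p n : ℕ, p.Prime ∧ Odd p ∧ 0 < n ∧ q = p ^ n)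
    (hm : 2 ≤ m) (hmo : Odd m) (hdvd : m ∣ (q + 1) / 2)
    (F : Type*) [Field F] [Fintype F] (hF : Fintype.card F = q ^ 2)
    (β : Fˣ) (hβ : ∀ u : Fˣ, u ∈ Subgroup.zpowers β) :
    (Set.Pairwise (Qcoset q m β 0) (AdjGP m)) ∧
    (∀ i : ℕ, 1 ≤ i → i ≤ m - 1 →
      ∀ x ∈ Qcoset q m β i, ∀ y ∈ Qcoset q m β i, x ≠ y → ¬ AdjGP m x y) ∧
    (∀ i₁ i₂ : ℕ, i₁ < i₂ → i₂ ≤ m - 1 →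
      ((m ∣ i₁ + i₂) → ∀ x ∈ Qcoset q m β i₁, ∀ y ∈ Qcoset q m β i₂, AdjGP m x y) ∧
      (¬ (m ∣ i₁ + i₂) → ∀ x ∈ Qcoset q m β i₁, ∀ y ∈ Qcoset q m β i₂, ¬ AdjGP m x y)) := by
  obtain ⟨p, n, hp, hpo, hn, hqpn⟩ := hq
  have key := fun s t => key_both q m p n hp hpo hn hqpn hm hdvd hF β hβ s t
  refine ⟨?_, ?_, ?_⟩
  · intro x hx y hy hxy
    obtain ⟨k₁, rfl⟩ := hx
    obtain ⟨k₂, rfl⟩ := hy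
    refine ((key _ _).2 hxy).mpr ⟨(k₁ : ℤ) + k₂, ?_⟩
    push_cast
    ring
  · intro i hi1 hi2 x hx y hy hxy hadj
    obtain ⟨k₁, rfl⟩ := hx
    obtain ⟨k₂, rfl⟩ := hy
    have hd := ((key _ _).2 hxy).mp hadj
    have h2i : (m : ℤ) ∣ 2 * i := by
      have heq2 : ((i + m * k₁ : ℕ) : ℤ) + ((i + m * k₂ : ℕ) : ℤ)
          = 2 * i + m * ((k₁ : ℤ) + k₂) := by push_cast; ring
      rw [heq2] at hd
      have h5 := dvd_sub hd (dvd_mul_right (m : ℤ) ((k₁ : ℤ) + k₂))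
      simpa using h5
    have h2i' : m ∣ i * 2 := by
      have : m ∣ 2 * i := by exact_mod_cast h2i
      rwa [mul_comm] at this
    have hmi : m ∣ i := (Nat.Coprime.dvd_of_dvd_mul_right (Nat.coprime_two_right.mpr hmo)) h2i'
    have := Nat.le_of_dvd (by omega) hmi
    omega
  · intro i₁ i₂ hlt hle
    have hne' : ∀ k₁ k₂ : ℕ,
        (((β ^ (q - 1)) ^ (i₁ + m * k₁) : Fˣ) : F) ≠ (((β ^ (q - 1)) ^ (i₂ + m * k₂) : Fˣ) : F) := by
      intro k₁ k₂ heq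
      have h3 := (key _ _).1 heq
      have h4 : (m : ℤ) ∣ (i₁ : ℤ) - i₂ := by
        have heq2 : ((i₁ + m * k₁ : ℕ) : ℤ) - ((i₂ + m * k₂ : ℕ) : ℤ)
            = ((i₁ : ℤ) - i₂) + m * ((k₁ : ℤ) - k₂) := by push_cast; ring
        rw [heq2] at h3
        have h5 := dvd_sub h3 (dvd_mul_right (m : ℤ) ((k₁ : ℤ) - k₂))
        simpa using h5
      have h6 : (m : ℤ) ∣ (i₂ : ℤ) - i₁ := by
        have := dvd_neg.mpr h4
        rwa [neg_sub] at this
      have h7 := Int.le_of_dvd (by omega) h6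
      omega
    constructor
    · intro hdvd' x hx y hy
      obtain ⟨k₁, rfl⟩ := hx
      obtain ⟨k₂, rfl⟩ := hy
      obtain ⟨d, hd⟩ := hdvd'
      refine ((key _ _).2 (hne' k₁ k₂)).mpr ⟨(d : ℤ) + k₁ + k₂, ?_⟩
      have hd' : (i₁ : ℤ) + i₂ = m * d := by exact_mod_cast hd
      push_cast
      linear_combination hd'
    · intro hnd x hx y hy hadj
      obtain ⟨k₁, rfl⟩ := hx
      obtain ⟨k₂, rfl⟩ := hy
      have hd := ((key _ _).2 (hne' k₁ k₂)).mp hadj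
      have h3 : (m : ℤ) ∣ (i₁ : ℤ) + i₂ := by
        have heq2 : ((i₁ + m * k₁ : ℕ) : ℤ) + ((i₂ + m * k₂ : ℕ) : ℤ)
            = ((i₁ : ℤ) + i₂) + m * ((k₁ : ℤ) + k₂) := by push_cast; ring
        rw [heq2] at hd
        have h5 := dvd_sub hd (dvd_mul_right (m : ℤ) ((k₁ : ℤ) + k₂))
        simpa using h5
      exact hnd (by exact_mod_cast h3)
end

section
/- Let q be an odd prime power and m ≥ 3 with m | (q+1). Suppose Q_{i_1} ∪ Q_{i_2} induces a complete bipartite subgraph in GP(q^2,m) with parts Q_{i_1}, Q_{i_2} each of size (q+1)/m. Then the function f: F_{q^2} → ℝ defined by f(γ) = 1 if γ ∈ Q_{i_1}, f(γ) = -1 if γ ∈ Q_{i_2}, and f(γ) = 0 otherwise, is an eigenfunction of GP(q^2,m) corresponding to the eigenvalue -(q+1)/m, with support of cardinality 2(q+1)/m. -/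
open scoped Classical

lemma WDB_sq_sub_one {q : ℕ} (hq : 1 ≤ q) : (q - 1) * (q + 1) = q ^ 2 - 1 := by
  rcases Nat.exists_eq_add_of_le hq with ⟨a, rfl⟩
  have h : (1 + a) ^ 2 = a * (1 + a + 1) + 1 := by ring
  rw [h]
  simp

section Helpers

variable {q m : ℕ} {F : Type*} [Field F] [Fintype F] {β : Fˣ}

lemma Qcoset_ne_zero {i : ℕ} {x : F} (hx : x ∈ Qcoset q m β i) : x ≠ 0 := by
  obtain ⟨k, rfl⟩ := hx; exact Units.ne_zero _

lemma Qcoset_norm (horder : orderOf β = q ^ 2 - 1) (hq1 : 1 ≤ q) {i : ℕ} {x : F}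
    (hx : x ∈ Qcoset q m β i) : x ^ (q + 1) = 1 := by
  obtain ⟨k, rfl⟩ := hx
  have h : ((β ^ (q - 1)) ^ (i + m * k)) ^ (q + 1) = 1 := by
    rw [← pow_mul, ← pow_mul, ← orderOf_dvd_iff_pow_eq_one, horder, ← WDB_sq_sub_one hq1]
    exact ⟨i + m * k, by ring⟩
  have h2 := congrArg (Units.val) h
  simpa using h2

lemma WDB_pow_q_of (hq1 : 1 ≤ q) {t : F} (h : t ^ (q - 1) = 1) : t ^ q = t := by
  have hq : q = (q - 1) + 1 := by omega
  rw [hq, pow_succ, h, one_mul]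

lemma WDB_pow_q_sub_one (hq1 : 1 ≤ q) {t : F} (ht0 : t ≠ 0) (h : t ^ q = t) :
    t ^ (q - 1) = 1 := by
  have hq : q = (q - 1) + 1 := by omega
  rw [hq, pow_succ] at h
  have := mul_right_cancel₀ ht0 (h.trans (one_mul t).symm)
  exact this

lemma WDB_oval (hq1 : 1 ≤ q) (hfrob : ∀ a b : F, (a + b) ^ q = a ^ q + b ^ q)
    {a b c t : F} (ha : a ^ (q + 1) = 1) (hb : b ^ (q + 1) = 1) (hc : c ^ (q + 1) = 1)
    (hab : a ≠ b) (hac : a ≠ c) (ht : t ^ q = t) (h : b - a = t * (c - a)) : b = c := by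
  have hq0 : q ≠ 0 := by omega
  have hneg : ∀ v : F, (-v) ^ q = -(v ^ q) := by
    intro v
    have h0 : ((v : F) + (-v)) ^ q = v ^ q + (-v) ^ q := hfrob v (-v)
    rw [add_neg_cancel, zero_pow hq0] at h0
    linear_combination -h0
  have hsub : ∀ u v : F, (u - v) ^ q = u ^ q - v ^ q := by
    intro u v
    rw [sub_eq_add_neg, hfrob, hneg, ← sub_eq_add_neg]
  have ha0 : a ≠ 0 := by rintro rfl; rw [zero_pow (by omega : q + 1 ≠ 0)] at ha; exact zero_ne_one ha
  have hb0 : b ≠ 0 := by rintro rfl; rw [zero_pow (by omega : q + 1 ≠ 0)] at hb; exact zero_ne_one hb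
  have hc0 : c ≠ 0 := by rintro rfl; rw [zero_pow (by omega : q + 1 ≠ 0)] at hc; exact zero_ne_one hc
  have haq : a ^ q = a⁻¹ := eq_inv_of_mul_eq_one_left (by rw [← pow_succ]; exact ha)
  have hbq : b ^ q = b⁻¹ := eq_inv_of_mul_eq_one_left (by rw [← pow_succ]; exact hb)
  have hcq : c ^ q = c⁻¹ := eq_inv_of_mul_eq_one_left (by rw [← pow_succ]; exact hc)
  have hq' := congrArg (· ^ q) h
  rw [hsub, mul_pow, ht, hsub, haq, hbq, hcq] at hq'
  have e2 : a * (b * c) * (b⁻¹ - a⁻¹) = c * (a - b) := by field_simp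
  have e3 : a * (b * c) * (t * (c⁻¹ - a⁻¹)) = t * (b * (a - c)) := by field_simp
  have e4 : c * (a - b) = t * (b * (a - c)) := by rw [← e2, hq', e3]
  have h' : a - b = t * (a - c) := by linear_combination -h
  have ht0 : t ≠ 0 := by
    rintro rfl
    rw [zero_mul] at h
    exact hab (by linear_combination -h)
  have hz : (c - b) * (t * (a - c)) = 0 := by linear_combination e4 - c * h'
  rcases mul_eq_zero.mp hz with h1 | h1
  · linear_combination -h1
  · rcases mul_eq_zero.mp h1 with h2 | h2
    · exact absurd h2 ht0
    · exact absurd (by linear_combination h2) hac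

end Helpers

section Helpers2

variable {q m : ℕ} {F : Type*} [Field F] [Fintype F] {β : Fˣ}

lemma WDB_dvd_int (hq1 : 1 ≤ q) : ((q : ℤ) + 1) ∣ ((q ^ 2 - 1 : ℕ) : ℤ) := by
  have : ((q ^ 2 - 1 : ℕ) : ℤ) = ((q : ℤ) + 1) * ((q : ℤ) - 1) := by
    have h1 : 1 ≤ q ^ 2 := Nat.one_le_pow _ _ (by omega)
    push_cast [Nat.cast_sub h1]
    ring
  rw [this]
  exact Dvd.intro _ rfl

/-- Nonzero `t` fixed by `x ↦ x^q` are `m`-th powers. -/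
lemma WDB_Fq_pow (hβ : ∀ u : Fˣ, u ∈ Subgroup.zpowers β) (horder : orderOf β = q ^ 2 - 1)
    (hq3 : 3 ≤ q) (hdvd : m ∣ q + 1) {t : F} (ht0 : t ≠ 0) (ht : t ^ q = t) :
    ∃ v : Fˣ, (v : F) ^ m = t := by
  obtain ⟨a, ha⟩ := Subgroup.mem_zpowers_iff.mp (hβ (Units.mk0 t ht0))
  have htcoe : ((β ^ a : Fˣ) : F) = t := by rw [ha]; rfl
  have ht1 : t ^ (q - 1) = 1 := WDB_pow_q_sub_one (by omega) ht0 ht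
  have hu1 : (β ^ a) ^ (q - 1) = 1 := by
    apply Units.ext
    push_cast [htcoe]
    exact ht1
  have hcast : ((q - 1 : ℕ) : ℤ) = (q : ℤ) - 1 := by omega
  have hz : β ^ (a * ((q : ℤ) - 1)) = 1 := by
    rw [← hcast, zpow_mul, zpow_natCast]
    exact hu1
  have hdvd1 : (orderOf β : ℤ) ∣ a * ((q : ℤ) - 1) := orderOf_dvd_iff_zpow_eq_one.mpr hz
  rw [horder] at hdvd1
  have hfac : ((q ^ 2 - 1 : ℕ) : ℤ) = ((q : ℤ) + 1) * ((q : ℤ) - 1) := by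
    have h1 : 1 ≤ q ^ 2 := Nat.one_le_pow _ _ (by omega)
    push_cast [Nat.cast_sub h1]
    ring
  rw [hfac] at hdvd1
  have hdvd2 : ((q : ℤ) + 1) ∣ a :=
    (mul_dvd_mul_iff_right (by omega : (q : ℤ) - 1 ≠ 0)).mp hdvd1
  obtain ⟨b, hb⟩ := hdvd2
  obtain ⟨s, hs⟩ := hdvd
  refine ⟨β ^ ((s : ℤ) * b), ?_⟩
  have hv : (β ^ ((s : ℤ) * b)) ^ (m : ℕ) = β ^ a := by
    rw [← zpow_natCast _ m, ← zpow_mul, hb]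
    congr 1
    have : ((q : ℤ) + 1) = (m : ℤ) * (s : ℤ) := by exact_mod_cast hs
    rw [this]; ring
  calc ((β ^ ((s : ℤ) * b) : Fˣ) : F) ^ m = (((β ^ ((s : ℤ) * b)) ^ (m : ℕ) : Fˣ) : F) := by
        push_cast; ring
    _ = t := by rw [hv, htcoe]

end Helpers2

noncomputable def WDBcls {F : Type*} [Field F] (β : Fˣ) (n1 : ℕ) : F → ZMod n1 := fun z =>
  if h : ∃ a : ℤ, z = ((β ^ a : Fˣ) : F) then (h.choose : ZMod n1) else 0

section Helpers3

variable {q m : ℕ} {F : Type*} [Field F] [Fintype F] {β : Fˣ}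

lemma WDBcls_spec (horder : orderOf β = q ^ 2 - 1) (hq1 : 1 ≤ q) {z : F} {a : ℤ}
    (hz : z = ((β ^ a : Fˣ) : F)) : WDBcls β (q + 1) z = (a : ZMod (q + 1)) := by
  rw [WDBcls, dif_pos ⟨a, hz⟩]
  have hs := (⟨a, hz⟩ : ∃ a : ℤ, z = ((β ^ a : Fˣ) : F)).choose_spec
  set c := (⟨a, hz⟩ : ∃ a : ℤ, z = ((β ^ a : Fˣ) : F)).choose with hc
  have hu : (β ^ c : Fˣ) = β ^ a := Units.ext (hs.symm.trans hz)
  have h1 : β ^ (c - a) = 1 := by rw [zpow_sub, hu]; simp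
  have h2 : (orderOf β : ℤ) ∣ c - a := orderOf_dvd_iff_zpow_eq_one.mpr h1
  rw [horder] at h2
  have h3 : ((q : ℤ) + 1) ∣ c - a := dvd_trans (WDB_dvd_int hq1) h2
  rw [ZMod.intCast_eq_intCast_iff]
  have h4 : ((q + 1 : ℕ) : ℤ) ∣ a - c := by
    have h5 := dvd_neg.mpr h3
    rw [neg_sub] at h5
    exact_mod_cast h5
  exact Int.modEq_iff_dvd.mpr h4

lemma WDBcls_eq (horder : orderOf β = q ^ 2 - 1) (hq3 : 3 ≤ q) {z w : F} {a b : ℤ}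
    (hz : z = ((β ^ a : Fˣ) : F)) (hw : w = ((β ^ b : Fˣ) : F))
    (h : WDBcls β (q + 1) z = WDBcls β (q + 1) w) :
    ∃ t : F, t ≠ 0 ∧ t ^ q = t ∧ z = t * w := by
  rw [WDBcls_spec horder (by omega) hz, WDBcls_spec horder (by omega) hw] at h
  have hd : ((q : ℤ) + 1) ∣ a - b := by
    have h2 := Int.ModEq.dvd ((ZMod.intCast_eq_intCast_iff _ _ _).mp h)
    have h3 : ((q : ℤ) + 1) ∣ b - a := by exact_mod_cast h2
    have h5 := dvd_neg.mpr h3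
    rwa [neg_sub] at h5
  obtain ⟨c, hc⟩ := hd
  refine ⟨((β ^ (((q : ℤ) + 1) * c) : Fˣ) : F), Units.ne_zero _, ?_, ?_⟩
  · apply WDB_pow_q_of (by omega : 1 ≤ q)
    have hu : (β ^ (((q : ℤ) + 1) * c)) ^ (q - 1) = 1 := by
      rw [← zpow_natCast _ (q - 1), ← zpow_mul, ← orderOf_dvd_iff_zpow_eq_one, horder]
      have hcast : ((q - 1 : ℕ) : ℤ) = (q : ℤ) - 1 := by omega
      have hfac : ((q ^ 2 - 1 : ℕ) : ℤ) = ((q : ℤ) + 1) * ((q : ℤ) - 1) := by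
        have h1 : 1 ≤ q ^ 2 := Nat.one_le_pow _ _ (by omega)
        push_cast [Nat.cast_sub h1]
        ring
    -- need: ((q^2-1 : ℕ) : ℤ) ∣ (q+1)*c*((q-1:ℕ):ℤ)
      rw [hcast, hfac]
      exact ⟨c, by ring⟩
    have hval := congrArg Units.val hu
    simpa using hval
  · rw [hz, hw]
    have hab : a = ((q : ℤ) + 1) * c + b := by linarith [hc]
    have hppp : (β ^ a) = β ^ (((q : ℤ) + 1) * c) * β ^ b := by rw [hab, zpow_add]
    rw [hppp, Units.val_mul]

end Helpers3

section KeyLemma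

variable {q m : ℕ} {F : Type*} [Field F] [Fintype F] {β : Fˣ}

lemma WDB_memM {s : ℕ} (hs0 : 0 < s) (hms : q + 1 = m * s) (a : ℤ) :
    ((a * m : ℤ) : ZMod (q + 1)) ∈
      (Finset.range s).image (fun jn : ℕ => ((m * jn : ℕ) : ZMod (q + 1))) := by
  have hsz : (0 : ℤ) < s := by exact_mod_cast hs0
  refine Finset.mem_image.mpr ⟨(a % s).toNat, Finset.mem_range.mpr ?_, ?_⟩
  · have h1 : 0 ≤ a % s := Int.emod_nonneg a (by omega)
    have h2 : a % s < s := Int.emod_lt_of_pos a hsz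
    omega
  · have hnn : 0 ≤ a % s := Int.emod_nonneg a (by omega)
    have h1 : (s : ℤ) ∣ (((a % s).toNat : ℤ) - a) := by
      rw [Int.toNat_of_nonneg hnn]
      exact ⟨-(a / s), by rw [Int.emod_def]; ring⟩
    obtain ⟨e, he⟩ := h1
    have hq1 : ((q : ℤ) + 1) = (m : ℤ) * (s : ℤ) := by exact_mod_cast hms
    have : (((m * (a % s).toNat : ℕ) : ℤ) : ZMod (q + 1)) = ((a * m : ℤ) : ZMod (q + 1)) := by
      rw [← sub_eq_zero, ← Int.cast_sub, ZMod.intCast_zmod_eq_zero_iff_dvd]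
      refine ⟨e, ?_⟩
      push_cast
      rw [hq1]
      linear_combination (m : ℤ) * he
    rw [← this]
    norm_cast

lemma WDB_key (hβ : ∀ u : Fˣ, u ∈ Subgroup.zpowers β) (horder : orderOf β = q ^ 2 - 1)
    (hq3 : 3 ≤ q) (hm : 3 ≤ m) (hdvd : m ∣ q + 1)
    (hfrob : ∀ a b : F, (a + b) ^ q = a ^ q + b ^ q)
    {i j : ℕ}
    (hdisj : Disjoint (Qcoset q m β i) (Qcoset q m β j))
    (hcardj : (Qcoset q m β j).ncard = (q + 1) / m)
    (hadj : ∀ x ∈ Qcoset q m β i, ∀ y ∈ Qcoset q m β j, AdjGP m x y)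
    {x : F} (hx : x ∈ Qcoset q m β i) {d : F} (hd : ∃ u : Fˣ, (u : F) ^ m = d) :
    ∃ y ∈ Qcoset q m β j, ∃ t : F, t ≠ 0 ∧ t ^ q = t ∧ x - y = t * d := by
  classical
  set s := (q + 1) / m with hsdef
  have hms : q + 1 = m * s := (Nat.div_mul_cancel hdvd).symm.trans (mul_comm _ _)
  have hs0 : 0 < s := Nat.div_pos (Nat.le_of_dvd (by omega) hdvd) (by omega)
  set B := (Qcoset q m β j).toFinset with hBdef
  have hBcard : B.card = s := by
    rw [hBdef, ← Set.ncard_eq_toFinset_card']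
    exact hcardj
  set Mset := (Finset.range s).image (fun jn : ℕ => ((m * jn : ℕ) : ZMod (q + 1))) with hMdef
  have hMle : Mset.card ≤ s := le_trans Finset.card_image_le (by simp)
  -- every x - y, y ∈ B, is a power β^(a*m)
  have hpow : ∀ y ∈ B, ∃ a : ℤ, x - y = ((β ^ (a * m) : Fˣ) : F) := by
    intro y hy
    obtain ⟨u, hu⟩ := hadj x hx y (Set.mem_toFinset.mp hy)
    obtain ⟨a, ha⟩ := Subgroup.mem_zpowers_iff.mp (hβ u)
    refine ⟨a, ?_⟩
    rw [← hu, ← ha]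
    have : (β ^ a) ^ (m : ℕ) = β ^ (a * m) := by
      rw [← zpow_natCast _ m, ← zpow_mul]
    rw [← this]
    push_cast
    ring
  set g : F → ZMod (q + 1) := fun y => WDBcls β (q + 1) (x - y) with hgdef
  have hginj : Set.InjOn g B := by
    intro y hy y' hy' hgy
    obtain ⟨a, ha⟩ := hpow y hy
    obtain ⟨a', ha'⟩ := hpow y' hy'
    obtain ⟨t, ht0, htq, hteq⟩ := WDBcls_eq horder hq3 ha ha' hgy
    have hyQ : y ∈ Qcoset q m β j := Set.mem_toFinset.mp hy
    have hy'Q : y' ∈ Qcoset q m β j := Set.mem_toFinset.mp hy'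
    have hxy : x ≠ y := fun h => Set.disjoint_left.mp hdisj hx (h ▸ hyQ)
    have hxy' : x ≠ y' := fun h => Set.disjoint_left.mp hdisj hx (h ▸ hy'Q)
    have hcol : y - x = t * (y' - x) := by linear_combination -hteq
    exact (WDB_oval (by omega) hfrob (Qcoset_norm horder (by omega) hx)
      (Qcoset_norm horder (by omega) hyQ) (Qcoset_norm horder (by omega) hy'Q)
      hxy hxy' htq hcol).symm ▸ rfl
  have himg : B.image g ⊆ Mset := by
    intro v hv
    obtain ⟨y, hy, rfl⟩ := Finset.mem_image.mp hv
    obtain ⟨a, ha⟩ := hpow y hy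
    rw [hgdef]
    simp only
    rw [WDBcls_spec horder (by omega) ha]
    exact WDB_memM hs0 hms a
  have hcard : (B.image g).card = s := by
    rw [Finset.card_image_of_injOn hginj, hBcard]
  have heq : B.image g = Mset := Finset.eq_of_subset_of_card_le himg (by omega)
  obtain ⟨u, hu⟩ := hd
  obtain ⟨ad, had⟩ := Subgroup.mem_zpowers_iff.mp (hβ u)
  have hd' : d = ((β ^ (ad * m) : Fˣ) : F) := by
    rw [← hu, ← had]
    have : (β ^ ad) ^ (m : ℕ) = β ^ (ad * m) := by
      rw [← zpow_natCast _ m, ← zpow_mul]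
    rw [← this]
    push_cast
    ring
  have hmem : ((ad * m : ℤ) : ZMod (q + 1)) ∈ B.image g := by
    rw [heq]
    exact WDB_memM hs0 hms ad
  obtain ⟨y, hyB, hgy⟩ := Finset.mem_image.mp hmem
  obtain ⟨a, ha⟩ := hpow y hyB
  have hclseq : WDBcls β (q + 1) (x - y) = WDBcls β (q + 1) d := by
    rw [WDBcls_spec horder (by omega) hd']
    rw [hgdef] at hgy
    exact hgy
  obtain ⟨t, ht0, htq, hteq⟩ := WDBcls_eq horder hq3 ha hd' hclseq
  exact ⟨y, Set.mem_toFinset.mp hyB, t, ht0, htq, hteq⟩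

end KeyLemma

section InjLemma

variable {q m : ℕ} {F : Type*} [Field F] [Fintype F] {β : Fˣ}

lemma WDB_card_le (hβ : ∀ u : Fˣ, u ∈ Subgroup.zpowers β) (horder : orderOf β = q ^ 2 - 1)
    (hq3 : 3 ≤ q) (hm : 3 ≤ m) (hdvd : m ∣ q + 1)
    (hfrob : ∀ a b : F, (a + b) ^ q = a ^ q + b ^ q)
    {i j : ℕ}
    (hdisj : Disjoint (Qcoset q m β i) (Qcoset q m β j))
    (hcardj : (Qcoset q m β j).ncard = (q + 1) / m)
    (hadj : ∀ x ∈ Qcoset q m β i, ∀ y ∈ Qcoset q m β j, AdjGP m x y)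
    {γ : F} (hγj : γ ∉ Qcoset q m β j) :
    ((Finset.univ.filter (fun δ : F => AdjGP m γ δ)) ∩ (Qcoset q m β i).toFinset).card ≤
    ((Finset.univ.filter (fun δ : F => AdjGP m γ δ)) ∩ (Qcoset q m β j).toFinset).card := by
  classical
  set N := Finset.univ.filter (fun δ : F => AdjGP m γ δ) with hN
  set P : F → F → Prop := fun x y =>
    y ∈ Qcoset q m β j ∧ ∃ t : F, t ≠ 0 ∧ t ^ q = t ∧ x - y = t * (γ - x) with hP
  have hex : ∀ x ∈ N ∩ (Qcoset q m β i).toFinset, ∃ y, P x y := by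
    intro x hx
    rw [Finset.mem_inter, hN, Finset.mem_filter] at hx
    obtain ⟨⟨-, hadjx⟩, hxi⟩ := hx
    obtain ⟨y, hyj, t, ht0, htq, hteq⟩ := WDB_key hβ horder hq3 hm hdvd hfrob hdisj hcardj hadj
      (Set.mem_toFinset.mp hxi) hadjx
    exact ⟨y, hyj, t, ht0, htq, hteq⟩
  apply Finset.card_le_card_of_injOn (fun x => if h : ∃ y, P x y then h.choose else 0)
  · -- maps into
    intro x hx
    simp only [Finset.mem_coe] at hx ⊢
    rw [dif_pos (hex x hx)]
    obtain ⟨hyj, t, ht0, htq, hteq⟩ := (hex x hx).choose_spec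
    set y := (hex x hx).choose with hy
    rw [Finset.mem_inter, hN, Finset.mem_filter] at hx
    obtain ⟨⟨-, hadjx⟩, hxi⟩ := hx
    have hyγ : y ≠ γ := fun h => hγj (h ▸ hyj)
    have ht1 : (1 : F) + t ≠ 0 := by
      intro h0
      apply hyγ
      have ht' : t = -1 := by linear_combination h0
      rw [ht'] at hteq
      linear_combination -hteq
    have hfq : ((1 : F) + t) ^ q = 1 + t := by rw [hfrob, one_pow, htq]
    obtain ⟨v, hv⟩ := WDB_Fq_pow hβ horder hq3 hdvd ht1 hfq
    obtain ⟨u, hu⟩ := hadjx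
    have hadjy : AdjGP m γ y := by
      refine ⟨v * u, ?_⟩
      have : ((v * u : Fˣ) : F) ^ m = ((1 : F) + t) * (γ - x) := by
        rw [Units.val_mul, mul_pow, hv, hu]
      rw [this]
      linear_combination -hteq
    rw [Finset.mem_inter, hN, Finset.mem_filter]
    exact ⟨⟨Finset.mem_univ _, hadjy⟩, Set.mem_toFinset.mpr hyj⟩
  · -- injective
    intro x hx x' hx' heq'
    rw [Finset.mem_coe] at hx hx'
    simp only at heq'
    rw [dif_pos (hex x hx), dif_pos (hex x' hx')] at heq'
    obtain ⟨hyj, t, ht0, htq, hteq⟩ := (hex x hx).choose_spec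
    obtain ⟨hy'j, t', ht0', htq', hteq'⟩ := (hex x' hx').choose_spec
    set y := (hex x hx).choose with hydef
    set y' := (hex x' hx').choose with hy'def
    rw [← heq'] at hteq' hy'j
    rw [Finset.mem_inter, hN, Finset.mem_filter] at hx hx'
    obtain ⟨⟨-, hadjx⟩, hxi⟩ := hx
    obtain ⟨⟨-, hadjx'⟩, hx'i⟩ := hx'
    have hxiQ := Set.mem_toFinset.mp hxi
    have hx'iQ := Set.mem_toFinset.mp hx'i
    have hyγ : y ≠ γ := fun h => hγj (h ▸ hyj)
    have ht1 : (1 : F) + t ≠ 0 := by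
      intro h0
      apply hyγ
      have ht'' : t = -1 := by linear_combination h0
      rw [ht''] at hteq
      linear_combination -hteq
    have ht1' : (1 : F) + t' ≠ 0 := by
      intro h0
      apply hyγ
      have ht'' : t' = -1 := by linear_combination h0
      rw [ht''] at hteq'
      linear_combination -hteq'
    have hγy : γ - y ≠ 0 := fun h => hyγ (by linear_combination -h)
    -- x - y = (t/(1+t)) (γ - y), x' - y = (t'/(1+t')) (γ - y)
    have e1 : ((1 : F) + t) * (x - y) = t * (γ - y) := by linear_combination hteq
    have e1' : ((1 : F) + t') * (x' - y) = t' * (γ - y) := by linear_combination hteq'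
    set R : F := (t * (1 + t')) / ((1 + t) * t') with hR
    have hRq : R ^ q = R := by
      simp only [hR, div_pow, mul_pow, hfrob, one_pow, htq, htq']
    have e15 : ((1 + t) * t') * (x - y) = (t * (1 + t')) * (x' - y) := by
      linear_combination t' * e1 - t * e1'
    have e2 : x - y = R * (x' - y) := by
      rw [hR, div_mul_eq_mul_div, eq_div_iff (mul_ne_zero ht1 ht0')]
      linear_combination e15
    have hxy : x ≠ y := fun h => Set.disjoint_left.mp hdisj hxiQ (h ▸ hyj)
    have hx'y : x' ≠ y := fun h => Set.disjoint_left.mp hdisj hx'iQ (h ▸ hyj)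
    have hcol : x - y = R * (x' - y) := e2
    exact WDB_oval (by omega) hfrob (Qcoset_norm horder (by omega) hyj)
      (Qcoset_norm horder (by omega) hxiQ) (Qcoset_norm horder (by omega) hx'iQ)
      (Ne.symm hxy) (Ne.symm hx'y) hRq hcol

end InjLemma


/-- If `Q_{i₁} ∪ Q_{i₂}` induces a complete bipartite subgraph of
`GP(q^2,m)` with parts of size `(q+1)/m`, then the `±1` indicator function of the two
parts is an eigenfunction for the eigenvalue `-(q+1)/m` with support of size `2(q+1)/m`. -/
theorem WDB_tight_eigenfunction
    (q m : ℕ) (hq : ∃ p n : ℕ, p.Prime ∧ Odd p ∧ 0 < n ∧ q = p ^ n)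
    (hm : 3 ≤ m) (hdvd : m ∣ q + 1)
    (F : Type*) [Field F] [Fintype F] (hF : Fintype.card F = q ^ 2)
    (β : Fˣ) (hβ : ∀ u : Fˣ, u ∈ Subgroup.zpowers β)
    (i₁ i₂ : ℕ) (hi : i₁ ≠ i₂) (hi₁ : i₁ ≤ m - 1) (hi₂ : i₂ ≤ m - 1)
    (hdisj : Disjoint (Qcoset q m β i₁) (Qcoset q m β i₂))
    (hcard₁ : (Qcoset q m β i₁).ncard = (q + 1) / m)
    (hcard₂ : (Qcoset q m β i₂).ncard = (q + 1) / m)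
    (hbip : ∀ x ∈ Qcoset q m β i₁, ∀ y ∈ Qcoset q m β i₂, AdjGP m x y ∧ AdjGP m y x)
    (hind₁ : ∀ x ∈ Qcoset q m β i₁, ∀ y ∈ Qcoset q m β i₁, ¬ AdjGP m x y)
    (hind₂ : ∀ x ∈ Qcoset q m β i₂, ∀ y ∈ Qcoset q m β i₂, ¬ AdjGP m x y)
    (f : F → ℝ)
    (hf : ∀ γ : F, f γ =
      if γ ∈ Qcoset q m β i₁ then 1 else if γ ∈ Qcoset q m β i₂ then -1 else 0) :
    f ≠ 0 ∧
    (∀ γ : F, (-(((q + 1) / m : ℕ) : ℝ)) * f γ =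
      ∑ δ ∈ Finset.univ.filter (fun δ : F => AdjGP m γ δ), f δ) ∧
    {γ : F | f γ ≠ 0}.ncard = 2 * ((q + 1) / m) := by
  obtain ⟨p, n, hp, hpodd, hn, hqpn⟩ := hq
  have hq3 : 3 ≤ q := by
    have hp2 := hp.two_le
    have hpo := Nat.odd_iff.mp hpodd
    have hp3 : 3 ≤ p := by omega
    calc 3 ≤ p := hp3
      _ ≤ p ^ n := Nat.le_self_pow (by omega) p
      _ = q := hqpn.symm
  have hcardu : Fintype.card Fˣ = q ^ 2 - 1 := by rw [Fintype.card_units, hF]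
  have horder : orderOf β = q ^ 2 - 1 := by
    rw [← hcardu, ← Nat.card_eq_fintype_card]; exact orderOf_eq_card_of_forall_mem_zpowers hβ
  have hcprime : (ringChar F).Prime := CharP.char_is_prime F _
  obtain ⟨k, hk1, hk2⟩ := FiniteField.card F (ringChar F)
  have hcp : ringChar F = p := by
    have h0 : Fintype.card F = p ^ (2 * n) := by
      rw [hF, hqpn, ← pow_mul, mul_comm]
    have h1 : ringChar F ∣ p ^ (2 * n) := by
      rw [← h0, hk2]
      exact dvd_pow_self (ringChar F) (by positivity)
    have h2 : ringChar F ∣ p := hcprime.dvd_of_dvd_pow h1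
    exact (Nat.prime_dvd_prime_iff_eq hcprime hp).mp h2
  haveI hcharp : CharP F p := by rw [← hcp]; exact ringChar.charP F
  haveI : Fact p.Prime := ⟨hp⟩
  have hfrob : ∀ a b : F, (a + b) ^ q = a ^ q + b ^ q := by
    intro a b; rw [hqpn]; exact add_pow_char_pow a b p n
  refine ⟨?_, ?_, ?_⟩
  · -- f ≠ 0
    intro h0
    have hx0 : (((β ^ (q - 1)) ^ (i₁ + m * 0) : Fˣ) : F) ∈ Qcoset q m β i₁ := ⟨0, rfl⟩
    have h1 := hf (((β ^ (q - 1)) ^ (i₁ + m * 0) : Fˣ) : F)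
    rw [h0, if_pos hx0] at h1
    simp at h1
  · -- eigen equation
    intro γ
    have hfsplit : ∀ δ : F, f δ =
        (if δ ∈ (Qcoset q m β i₁).toFinset then (1 : ℝ) else 0) +
        (if δ ∈ (Qcoset q m β i₂).toFinset then (-1 : ℝ) else 0) := by
      intro δ
      rw [hf δ]
      by_cases h1 : δ ∈ Qcoset q m β i₁
      · have h2 : δ ∉ Qcoset q m β i₂ := fun h => Set.disjoint_left.mp hdisj h1 h
        rw [if_pos h1, if_pos (Set.mem_toFinset.mpr h1),
          if_neg (fun h => h2 (Set.mem_toFinset.mp h))]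
        ring
      · rw [if_neg h1, if_neg (fun h => h1 (Set.mem_toFinset.mp h))]
        by_cases h2 : δ ∈ Qcoset q m β i₂
        · rw [if_pos h2, if_pos (Set.mem_toFinset.mpr h2)]; ring
        · rw [if_neg h2, if_neg (fun h => h2 (Set.mem_toFinset.mp h))]; ring
    have hsum : ∑ δ ∈ Finset.univ.filter (fun δ : F => AdjGP m γ δ), f δ =
        (((Finset.univ.filter (fun δ : F => AdjGP m γ δ)) ∩ (Qcoset q m β i₁).toFinset).card : ℝ)
        - (((Finset.univ.filter (fun δ : F => AdjGP m γ δ)) ∩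
            (Qcoset q m β i₂).toFinset).card : ℝ) := by
      rw [Finset.sum_congr rfl (fun δ _ => hfsplit δ), Finset.sum_add_distrib,
        Finset.sum_ite_mem, Finset.sum_ite_mem, Finset.sum_const, Finset.sum_const]
      simp [nsmul_eq_mul]
      ring
    rw [hsum]
    by_cases hγ1 : γ ∈ Qcoset q m β i₁
    · have hNA : (Finset.univ.filter (fun δ : F => AdjGP m γ δ)) ∩
          (Qcoset q m β i₁).toFinset = ∅ := by
        apply Finset.eq_empty_of_forall_notMem
        intro δ hδ
        rw [Finset.mem_inter, Finset.mem_filter] at hδ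
        exact hind₁ γ hγ1 δ (Set.mem_toFinset.mp hδ.2) hδ.1.2
      have hNB : (Finset.univ.filter (fun δ : F => AdjGP m γ δ)) ∩
          (Qcoset q m β i₂).toFinset = (Qcoset q m β i₂).toFinset := by
        apply Finset.inter_eq_right.mpr
        intro δ hδ
        rw [Finset.mem_filter]
        exact ⟨Finset.mem_univ _, (hbip γ hγ1 δ (Set.mem_toFinset.mp hδ)).1⟩
      have hBcard : (Qcoset q m β i₂).toFinset.card = (q + 1) / m := by
        rw [← Set.ncard_eq_toFinset_card']; exact hcard₂
      rw [hNA, hNB, hBcard, hf γ, if_pos hγ1]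
      simp
    · by_cases hγ2 : γ ∈ Qcoset q m β i₂
      · have hNB : (Finset.univ.filter (fun δ : F => AdjGP m γ δ)) ∩
            (Qcoset q m β i₂).toFinset = ∅ := by
          apply Finset.eq_empty_of_forall_notMem
          intro δ hδ
          rw [Finset.mem_inter, Finset.mem_filter] at hδ
          exact hind₂ γ hγ2 δ (Set.mem_toFinset.mp hδ.2) hδ.1.2
        have hNA : (Finset.univ.filter (fun δ : F => AdjGP m γ δ)) ∩
            (Qcoset q m β i₁).toFinset = (Qcoset q m β i₁).toFinset := by
          apply Finset.inter_eq_right.mpr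
          intro δ hδ
          rw [Finset.mem_filter]
          exact ⟨Finset.mem_univ _, (hbip δ (Set.mem_toFinset.mp hδ) γ hγ2).2⟩
        have hAcard : (Qcoset q m β i₁).toFinset.card = (q + 1) / m := by
          rw [← Set.ncard_eq_toFinset_card']; exact hcard₁
        rw [hNA, hNB, hAcard, hf γ, if_neg hγ1, if_pos hγ2]
        simp
      · have hle1 := WDB_card_le hβ horder hq3 hm hdvd hfrob hdisj hcard₂
          (fun x hx y hy => (hbip x hx y hy).1) hγ2
        have hle2 := WDB_card_le hβ horder hq3 hm hdvd hfrob hdisj.symm hcard₁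
          (fun x hx y hy => (hbip y hy x hx).2) hγ1
        have hEq := le_antisymm hle1 hle2
        rw [hEq, hf γ, if_neg hγ1, if_neg hγ2]
        simp
  · -- support
    have hsupp : {γ : F | f γ ≠ 0} = Qcoset q m β i₁ ∪ Qcoset q m β i₂ := by
      ext γ
      simp only [Set.mem_setOf_eq, Set.mem_union, hf γ]
      by_cases h1 : γ ∈ Qcoset q m β i₁
      · simp [h1]
      · by_cases h2 : γ ∈ Qcoset q m β i₂ <;> simp [h1, h2]
    rw [hsupp, Set.ncard_union_eq hdisj (Set.toFinite _) (Set.toFinite _), hcard₁, hcard₂]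
    omega
end

section
/- Let q be an odd prime power and m ≥ 2 divide (q+1)/2. Then {0} ∪ Q_0 is a clique of size (q+1+m)/m in GP(q^2,m), where Q_0 = ⟨ω^m⟩ and ω = β^{q-1} for a primitive element β of F_{q^2}. -/
private lemma key_lemma (q m : ℕ) {F : Type*} [Field F] [Fintype F]
    (β : Fˣ) (hβ : ∀ u : Fˣ, u ∈ Subgroup.zpowers β)
    (p n : ℕ) [Fact p.Prime] [CharP F p] (hqpn : q = p ^ n)
    (hq3 : 3 ≤ q)
    (hordβ : orderOf β = q ^ 2 - 1)
    (hneg : ((β : F)) ^ ((q ^ 2 - 1) / 2) = -1)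
    (hmq2 : m ∣ (q + 1) / 2) (hm0 : 0 < m) (h2 : 2 ∣ q + 1)
    (t : ℕ) (hmt : m ∣ t) (hw1 : ((β : F)) ^ ((q - 1) * t) ≠ 1) :
    ∃ δ : Fˣ, ((δ : F)) ^ m = ((β : F)) ^ ((q - 1) * t) - 1 := by
  obtain ⟨e, rfl⟩ : ∃ e, q = e + 1 := ⟨q - 1, by omega⟩
  simp only [Nat.add_sub_cancel] at hw1 ⊢
  have hN : (e + 1) ^ 2 - 1 = (e + 1 + 1) * e := by
    have h : (e + 1) ^ 2 = (e + 1 + 1) * e + 1 := by ring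
    omega
  obtain ⟨c2, hc2⟩ : ∃ c2, e + 1 + 1 = 2 * c2 := h2
  have hN2 : ((e + 1) ^ 2 - 1) / 2 = c2 * e := by
    rw [hN, hc2, mul_assoc, Nat.mul_div_cancel_left _ (by norm_num)]
  have hd : ((β : F)) ^ (e * t) - 1 ≠ 0 := sub_ne_zero.mpr hw1
  have hu : (Units.mk0 _ hd) ∈ Submonoid.powers β := by
    rw [mem_powers_iff_mem_zpowers]; exact hβ _
  obtain ⟨s, hs⟩ := hu
  have hsF : ((β : F)) ^ s = ((β : F)) ^ (e * t) - 1 := by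
    have h := congrArg (Units.val) hs
    simpa using h
  have horder : ((β : F)) ^ ((e + 1) ^ 2 - 1) = 1 := by
    have h := pow_orderOf_eq_one β
    rw [hordβ] at h
    have h2 := congrArg (Units.val) h
    simpa using h2
  have hq_pow : ((β : F)) ^ (s * (e + 1)) = ((β : F)) ^ (e * t * (e + 1)) - 1 := by
    have h1 := congrArg (· ^ (e + 1)) hsF
    rw [← pow_mul, hqpn, sub_pow_char_pow, one_pow, ← pow_mul, ← hqpn] at h1
    exact h1
  have hkey : ((β : F)) ^ (e * t + s * (e + 1))
      = ((β : F)) ^ (((e + 1) ^ 2 - 1) / 2 + s) := by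
    have h3 : e * t + e * t * (e + 1) = ((e + 1) ^ 2 - 1) * t := by
      rw [hN]; ring
    have h4 : ((β : F)) ^ (((e + 1) ^ 2 - 1) * t) = 1 := by
      rw [pow_mul, horder, one_pow]
    calc ((β : F)) ^ (e * t + s * (e + 1))
        = ((β : F)) ^ (e * t) * ((β : F)) ^ (s * (e + 1)) := pow_add _ _ _
      _ = ((β : F)) ^ (e * t + e * t * (e + 1)) - ((β : F)) ^ (e * t) := by
          rw [hq_pow, mul_sub, mul_one, ← pow_add]
      _ = 1 - ((β : F)) ^ (e * t) := by rw [h3, h4]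
      _ = ((β : F)) ^ (((e + 1) ^ 2 - 1) / 2) * ((β : F)) ^ s := by
          rw [hsF, hneg]; ring
      _ = ((β : F)) ^ (((e + 1) ^ 2 - 1) / 2 + s) := (pow_add _ _ _).symm
  have hkeyU : β ^ (e * t + s * (e + 1)) = β ^ (((e + 1) ^ 2 - 1) / 2 + s) := by
    apply Units.ext
    simpa using hkey
  have hmod : e * t + s * (e + 1) ≡ ((e + 1) ^ 2 - 1) / 2 + s [MOD (e + 1) ^ 2 - 1] := by
    have h := (pow_eq_pow_iff_modEq).mp hkeyU
    rwa [hordβ] at h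
  have harith : e * t + s * (e + 1) = (s + t) * e + s := by ring
  have hmod2 : (s + t) * e + s ≡ c2 * e + s [MOD (e + 1 + 1) * e] := by
    rw [← harith, ← hN2, ← hN]; exact hmod
  have hmod3 := Nat.ModEq.add_right_cancel' s hmod2
  have hmod4 : s + t ≡ c2 [MOD e + 1 + 1] :=
    Nat.ModEq.mul_right_cancel' (by omega) hmod3
  have hc2m : m ∣ c2 := by
    have h : (e + 1 + 1) / 2 = c2 := by omega
    rwa [h] at hmq2
  have hmq1 : m ∣ e + 1 + 1 := hc2 ▸ Dvd.dvd.mul_left hc2m 2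
  have hmod5 : s + t ≡ c2 [MOD m] := hmod4.of_dvd hmq1
  have hms : m ∣ s + t := by
    have h0 : c2 ≡ 0 [MOD m] := (Nat.modEq_zero_iff_dvd).mpr hc2m
    exact (Nat.modEq_zero_iff_dvd).mp (hmod5.trans h0)
  have hmsonly : m ∣ s := by
    have h := Nat.dvd_sub hms hmt
    simpa using h
  refine ⟨β ^ (s / m), ?_⟩
  rw [Units.val_pow_eq_pow_val, ← pow_mul, Nat.div_mul_cancel hmsonly, hsF]

/-- If `m ≥ 2` divides `(q+1)/2` then `{0} ∪ Q_0` is a clique of size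
`(q+1+m)/m` in `GP(q^2,m)`. -/
theorem zero_union_Q0_clique
    (q m : ℕ) (hq : ∃ p n : ℕ, p.Prime ∧ Odd p ∧ 0 < n ∧ q = p ^ n)
    (hm : 2 ≤ m) (hdvd : m ∣ (q + 1) / 2)
    (F : Type*) [Field F] [Fintype F] (hF : Fintype.card F = q ^ 2)
    (β : Fˣ) (hβ : ∀ u : Fˣ, u ∈ Subgroup.zpowers β) :
    Set.Pairwise ({(0 : F)} ∪ Qcoset q m β 0) (AdjGP m) ∧
    ({(0 : F)} ∪ Qcoset q m β 0).ncard = (q + 1 + m) / m := by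
  classical
  obtain ⟨p, n, hp, hpodd, hn, hqpn⟩ := hq
  haveI : Fact p.Prime := ⟨hp⟩
  have hp3 : 3 ≤ p := by
    have := hp.two_le
    rcases Nat.lt_or_ge p 3 with h | h
    · interval_cases p
      · exact absurd hpodd (by decide)
    · exact h
  have hq3 : 3 ≤ q := by
    calc 3 ≤ p := hp3
    _ ≤ p ^ n := Nat.le_self_pow (by omega) p
    _ = q := hqpn.symm
  have hqodd : Odd q := hqpn ▸ hpodd.pow
  have h2 : 2 ∣ q + 1 := by
    have := Nat.odd_iff.mp hqodd
    omega
  have hm0 : 0 < m := by omega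
  -- characteristic
  have hrc : ringChar F = p := by
    haveI := ringChar.charP F
    have hprime : (ringChar F).Prime := CharP.char_is_prime F (ringChar F)
    obtain ⟨k, _, hcard⟩ := FiniteField.card F (ringChar F)
    have hdv : ringChar F ∣ p ^ (n * 2) := by
      have : ringChar F ∣ ringChar F ^ (k : ℕ) := dvd_pow_self _ (by positivity)
      rw [← hcard, hF, hqpn, ← pow_mul] at this
      exact this
    exact (Nat.prime_dvd_prime_iff_eq hprime hp).mp (hprime.dvd_of_dvd_pow hdv)
  haveI hchar : CharP F p := hrc ▸ ringChar.charP F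
  have hcardU : Fintype.card Fˣ = q ^ 2 - 1 := by rw [Fintype.card_units, hF]
  have hordβ : orderOf β = q ^ 2 - 1 := by
    rw [orderOf_eq_card_of_forall_mem_zpowers hβ, Nat.card_eq_fintype_card, hcardU]
  have hN8 : 8 ≤ q ^ 2 - 1 := by
    have h : 9 ≤ q ^ 2 := by nlinarith
    omega
  have h2N : 2 ∣ q ^ 2 - 1 := by
    have h1 := Nat.odd_iff.mp hqodd
    have h2' : q ^ 2 % 2 = 1 := Nat.odd_iff.mp (hqodd.pow)
    omega
  have horder1 : ((β : F)) ^ (q ^ 2 - 1) = 1 := by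
    have h := pow_orderOf_eq_one β
    rw [hordβ] at h
    simpa using congrArg Units.val h
  have hneg : ((β : F)) ^ ((q ^ 2 - 1) / 2) = -1 := by
    have hsq : (((β : F)) ^ ((q ^ 2 - 1) / 2)) * (((β : F)) ^ ((q ^ 2 - 1) / 2)) = 1 := by
      rw [← pow_add]
      have h : (q ^ 2 - 1) / 2 + (q ^ 2 - 1) / 2 = q ^ 2 - 1 := by omega
      rw [h, horder1]
    rcases mul_self_eq_one_iff.mp hsq with h1 | h1
    · exfalso
      have hu : β ^ ((q ^ 2 - 1) / 2) = 1 := by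
        apply Units.ext; simpa using h1
      have hdv := orderOf_dvd_of_pow_eq_one hu
      rw [hordβ] at hdv
      have := Nat.le_of_dvd (by omega) hdv
      omega
    · exact h1
  -- facts about q+1, m
  obtain ⟨c2, hc2⟩ : ∃ c2, q + 1 = 2 * c2 := h2
  have hc2m : m ∣ c2 := by
    have h : (q + 1) / 2 = c2 := by omega
    rwa [h] at hdvd
  have hmq1 : m ∣ q + 1 := hc2 ▸ Dvd.dvd.mul_left hc2m 2
  have hNfac : q ^ 2 - 1 = (q + 1) * (q - 1) := by
    simpa using Nat.sq_sub_sq q 1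
  have hmN2 : m ∣ (q ^ 2 - 1) / 2 := by
    have h : (q ^ 2 - 1) / 2 = c2 * (q - 1) := by
      rw [hNfac, hc2, mul_assoc, Nat.mul_div_cancel_left _ (by norm_num)]
    rw [h]
    exact Dvd.dvd.mul_right hc2m _
  -- m-th root of -1
  have hν : (((β ^ ((q ^ 2 - 1) / 2 / m) : Fˣ) : F)) ^ m = -1 := by
    rw [Units.val_pow_eq_pow_val, ← pow_mul, Nat.div_mul_cancel hmN2, hneg]
  have hKey := key_lemma q m β hβ p n hqpn hq3 hordβ hneg hdvd hm0 ⟨c2, hc2⟩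
  have hKeyW : ∀ t : ℕ, m ∣ t → ((β : F) ^ (q - 1)) ^ t ≠ (1 : F) →
      ∃ δ : Fˣ, ((δ : F)) ^ m = ((β : F) ^ (q - 1)) ^ t - 1 := by
    intro t ht hW
    obtain ⟨δ, hδ⟩ := hKey t ht (by rwa [← pow_mul] at hW)
    exact ⟨δ, by rwa [pow_mul] at hδ⟩
  -- adjacency for ordered pairs in Q0
  have hAdj : ∀ a b : ℕ, b ≤ a →
      ((β : F) ^ (q - 1)) ^ (m * a) ≠ ((β : F) ^ (q - 1)) ^ (m * b) →
      AdjGP m (((β : F) ^ (q - 1)) ^ (m * a)) (((β : F) ^ (q - 1)) ^ (m * b)) := by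
    intro a b hba hne
    have hsplit : m * a = m * b + m * (a - b) := by
      rw [← Nat.mul_add]
      congr 1
      omega
    have hw1 : ((β : F) ^ (q - 1)) ^ (m * (a - b)) ≠ 1 := by
      intro hcon
      apply hne
      rw [hsplit, pow_add, hcon, mul_one]
    obtain ⟨δ₀, hδ₀⟩ := hKeyW (m * (a - b)) ⟨a - b, rfl⟩ hw1
    refine ⟨(β ^ (q - 1)) ^ b * δ₀, ?_⟩
    have hb : (((β ^ (q - 1)) ^ b : Fˣ) : F) = ((β : F) ^ (q - 1)) ^ b := by
      simp [Units.val_pow_eq_pow_val]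
    rw [Units.val_mul, mul_pow, hb, hδ₀, ← pow_mul, mul_sub, ← pow_add, mul_one]
    rw [show b * m + m * (a - b) = m * a from by
        rw [mul_comm b m, ← Nat.mul_add]; congr 1; omega,
      show b * m = m * b from mul_comm b m]
  -- symmetry helper: -1 is an m-th power
  have hAdjSymm : ∀ x y : F, AdjGP m x y → AdjGP m y x := by
    rintro x y ⟨δ, hδ⟩
    refine ⟨β ^ ((q ^ 2 - 1) / 2 / m) * δ, ?_⟩
    rw [Units.val_mul, mul_pow, hν, hδ]
    ring
  -- membership normal form
  have hmem : ∀ z : F, z ∈ ({(0 : F)} ∪ Qcoset q m β 0) →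
      z = 0 ∨ ∃ k : ℕ, z = ((β : F) ^ (q - 1)) ^ (m * k) := by
    intro z hz
    rcases hz with hz | hz
    · left; simpa using hz
    · right
      obtain ⟨k, hk⟩ := hz
      refine ⟨k, ?_⟩
      rw [hk]
      simp [Units.val_pow_eq_pow_val]
  constructor
  · intro x hx y hy hxy
    rcases hmem x hx with rfl | ⟨a, rfl⟩
    · rcases hmem y hy with rfl | ⟨k, rfl⟩
      · exact absurd rfl hxy
      · -- 0 adjacent to W^(m k)
        refine ⟨β ^ ((q ^ 2 - 1) / 2 / m) * (β ^ (q - 1)) ^ k, ?_⟩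
        rw [Units.val_mul, mul_pow, hν]
        have hb : (((β ^ (q - 1)) ^ k : Fˣ) : F) = ((β : F) ^ (q - 1)) ^ k := by
          simp [Units.val_pow_eq_pow_val]
        rw [hb, ← pow_mul, mul_comm k m]
        ring
    · rcases hmem y hy with rfl | ⟨b, rfl⟩
      · refine ⟨(β ^ (q - 1)) ^ a, ?_⟩
        have hb : (((β ^ (q - 1)) ^ a : Fˣ) : F) = ((β : F) ^ (q - 1)) ^ a := by
          simp [Units.val_pow_eq_pow_val]
        rw [hb, ← pow_mul, mul_comm a m]
        ring
      · rcases le_total b a with hba | hab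
        · exact hAdj a b hba hxy
        · exact hAdjSymm _ _ (hAdj b a hab (Ne.symm hxy))
  · -- cardinality
    have h0 : (0 : F) ∉ Qcoset q m β 0 := by
      rintro ⟨k, hk⟩
      exact (Units.ne_zero _) hk.symm
    have hword : orderOf (β ^ (q - 1)) = q + 1 := by
      rw [orderOf_pow, hordβ]
      have hgcd : Nat.gcd (q ^ 2 - 1) (q - 1) = q - 1 :=
        Nat.gcd_eq_right ⟨q + 1, by rw [hNfac]; ring⟩
      rw [hgcd, hNfac, Nat.mul_div_cancel _ (by omega)]
    have hQ : Qcoset q m β 0 =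
        Units.val '' ((Submonoid.powers ((β ^ (q - 1)) ^ m) : Submonoid Fˣ) : Set Fˣ) := by
      ext x
      simp only [Qcoset, Set.mem_setOf_eq, Set.mem_image, SetLike.mem_coe,
        Submonoid.mem_powers_iff]
      constructor
      · rintro ⟨k, rfl⟩
        exact ⟨(β ^ (q - 1)) ^ (0 + m * k), ⟨k, by rw [← pow_mul, Nat.zero_add]⟩, rfl⟩
      · rintro ⟨u, ⟨k, rfl⟩, rfl⟩
        exact ⟨k, by rw [← pow_mul, Nat.zero_add]⟩
    have hcard : (Qcoset q m β 0).ncard = (q + 1) / m := by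
      rw [hQ, Set.ncard_image_of_injective _ Units.val_injective]
      rw [(isOfFinOrder_of_finite ((β ^ (q - 1)) ^ m)).powers_eq_zpowers]
      rw [← Nat.card_coe_set_eq]
      rw [SetLike.coe_sort_coe, Nat.card_zpowers]
      rw [orderOf_pow, hword, Nat.gcd_eq_right hmq1]
    rw [Set.ncard_union_eq (Set.disjoint_singleton_left.mpr h0) (Set.toFinite _)
      (Set.toFinite _), Set.ncard_singleton, hcard, Nat.add_div_right _ hm0]
    omega
end

section
/- Let q be an odd prime power, m ≥ 2 with m | (q+1), and α ∈ F_{q^2} with α^2 a non-square in F_q^*. If m does not divide (q+1)/2, then αQ_0 is a clique of size (q+1)/m in GP(q^2,m); if m divides (q+1)/2, then {0} ∪ αQ_0 is a clique of size (q+1+m)/m in GP(q^2,m). -/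
/-- If `x^N = 1` and the unit group has order `m*N`, then `x` is an `m`-th power. -/
lemma aux_root {F : Type*} [Field F] [Fintype F] (β x : Fˣ)
    (hβ : ∀ u : Fˣ, u ∈ Subgroup.zpowers β)
    (m N : ℕ) (hN : 0 < N) (hcard : Nat.card Fˣ = m * N)
    (hx : x ^ N = 1) : ∃ δ : Fˣ, δ ^ m = x := by
  have hord : orderOf β = m * N := by
    rw [orderOf_eq_card_of_forall_mem_zpowers hβ, hcard]
  obtain ⟨s, hs⟩ := hβ x
  have hs' : β ^ s = x := hs
  have h1 : β ^ (s * (N : ℤ)) = 1 := by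
    rw [zpow_mul, hs', zpow_natCast, hx]
  have h2 : ((m * N : ℕ) : ℤ) ∣ s * N := by
    rw [← hord]; exact orderOf_dvd_iff_zpow_eq_one.mpr h1
  obtain ⟨t, ht⟩ := h2
  have h3 : s = m * t := by
    have hN' : (N : ℤ) ≠ 0 := by exact_mod_cast hN.ne'
    apply mul_right_cancel₀ hN'
    push_cast at ht ⊢
    linarith [ht]
  refine ⟨β ^ t, ?_⟩
  rw [← hs', h3]
  rw [← zpow_natCast (β ^ t) m, ← zpow_mul, mul_comm t (m : ℤ)]

set_option maxHeartbeats 1000000 in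
/-- With `α^2` a non-square in `F_q^*`: if `m ∤ (q+1)/2` then `αQ_0` is a
clique of size `(q+1)/m` in `GP(q^2,m)`; if `m ∣ (q+1)/2` then `{0} ∪ αQ_0` is a clique
of size `(q+1+m)/m`. -/
theorem alphaQ0_clique
    (q m : ℕ) (hq : ∃ p n : ℕ, p.Prime ∧ Odd p ∧ 0 < n ∧ q = p ^ n)
    (hm : 2 ≤ m) (hdvd : m ∣ q + 1)
    (F : Type*) [Field F] [Fintype F] (hF : Fintype.card F = q ^ 2)
    (β : Fˣ) (hβ : ∀ u : Fˣ, u ∈ Subgroup.zpowers β)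
    (d α : F) (hdq : d ^ q = d) (hd0 : d ≠ 0)
    (hns : ¬∃ s : F, s ^ q = s ∧ s ^ 2 = d) (hα : α ^ 2 = d) :
    (¬ (m ∣ (q + 1) / 2) →
      Set.Pairwise ((α * ·) '' Qcoset q m β 0) (AdjGP m) ∧
      ((α * ·) '' Qcoset q m β 0).ncard = (q + 1) / m) ∧
    ((m ∣ (q + 1) / 2) →
      Set.Pairwise ({(0 : F)} ∪ (α * ·) '' Qcoset q m β 0) (AdjGP m) ∧
      ({(0 : F)} ∪ (α * ·) '' Qcoset q m β 0).ncard = (q + 1 + m) / m) := by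
  classical
  obtain ⟨p, n, hp, hpodd, hn, hqpn⟩ := hq
  -- numerics
  have hp3 : 3 ≤ p := by
    rcases hp.two_le.lt_or_eq with h | h
    · omega
    · exfalso; rw [← h] at hpodd; exact (Nat.not_odd_iff_even.mpr even_two) hpodd
  have hq3 : 3 ≤ q := le_trans hp3 (hqpn ▸ Nat.le_self_pow hn.ne' p)
  have hqodd : Odd q := hqpn ▸ hpodd.pow
  obtain ⟨e, he⟩ := hqodd   -- q = 2*e + 1
  have he1 : 1 ≤ e := by omega
  obtain ⟨r, hr⟩ := hdvd    -- q + 1 = m * r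
  have hr1 : 1 ≤ r := by
    rcases Nat.eq_zero_or_pos r with h | h
    · subst h; omega
    · exact h
  have hq21 : q ^ 2 - 1 = (q - 1) * (q + 1) := by
    zify [show 1 ≤ q ^ 2 by nlinarith, show 1 ≤ q by omega]
    ring
  -- characteristic
  haveI hcharF : CharP F (ringChar F) := ringChar.charP F
  have hprime' : (ringChar F).Prime := CharP.char_is_prime F _
  obtain ⟨k, -, hk⟩ := FiniteField.card F (ringChar F)
  have hrc : ringChar F = p := by
    have h1 : ringChar F ∣ p ^ (n * 2) := by
      have : ringChar F ∣ (ringChar F) ^ (k : ℕ) := dvd_pow_self _ (PNat.pos k).ne'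
      rwa [← hk, hF, hqpn, ← pow_mul] at this
    exact (Nat.prime_dvd_prime_iff_eq hprime' hp).mp (hprime'.dvd_of_dvd_pow h1)
  haveI : CharP F p := hrc ▸ hcharF
  haveI : Fact p.Prime := ⟨hp⟩
  have hfrob : ∀ x y : F, (x - y) ^ q = x ^ q - y ^ q := by
    intro x y; rw [hqpn]; exact sub_pow_char_pow x y n
  -- unit group
  have hcu : Nat.card Fˣ = q ^ 2 - 1 := by
    rw [Nat.card_units F, Nat.card_eq_fintype_card, hF]
  have hob : orderOf β = q ^ 2 - 1 := by
    rw [orderOf_eq_card_of_forall_mem_zpowers hβ, hcu]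
  set ω : Fˣ := β ^ (q - 1) with hωdef
  have homega : orderOf ω = q + 1 := by
    rw [hωdef, orderOf_pow, hob, hq21, Nat.gcd_eq_right ⟨q + 1, rfl⟩,
      Nat.mul_div_cancel_left _ (by omega : 0 < q - 1)]
  have hω1 : ω ^ (q + 1) = 1 := by rw [← homega]; exact pow_orderOf_eq_one ω
  -- β^(e*(q+1)) = -1
  have hhalf : β ^ (e * (q + 1)) = (-1 : Fˣ) := by
    have h2 : (β ^ (e * (q + 1))) * (β ^ (e * (q + 1))) = 1 := by
      rw [← pow_add, show e * (q + 1) + e * (q + 1) = q ^ 2 - 1 by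
        rw [hq21]; have : q - 1 = 2 * e := by omega
        rw [this]; ring, ← hob]
      exact pow_orderOf_eq_one β
    have hne : β ^ (e * (q + 1)) ≠ 1 := by
      intro h
      have hd := orderOf_dvd_of_pow_eq_one h
      rw [hob] at hd
      have hle := Nat.le_of_dvd (by positivity) hd
      have hlt : e * (q + 1) < (q - 1) * (q + 1) := by
        have h2e : q - 1 = 2 * e := by omega
        rw [h2e]
        nlinarith [he1, hq3]
      omega
    have hF2 : ((β ^ (e * (q + 1)) : Fˣ) : F) * ((β ^ (e * (q + 1)) : Fˣ) : F) = 1 := by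
      rw [← Units.val_mul, h2, Units.val_one]
    rcases mul_self_eq_one_iff.mp hF2 with h | h
    · exact absurd (Units.ext h) hne
    · apply Units.ext
      rw [h, Units.val_neg, Units.val_one]
  -- the element d as a power of β
  set du : Fˣ := Units.mk0 d hd0 with hdu
  obtain ⟨s, hs0⟩ := hβ du
  have hs : β ^ s = du := hs0
  have hduq : du ^ (q - 1) = 1 := by
    have h1 : du ^ (q - 1) * du = 1 * du := by
      rw [← pow_succ, show q - 1 + 1 = q by omega, one_mul]
      apply Units.ext
      rw [Units.val_pow_eq_pow_val]
      exact hdq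
    exact mul_right_cancel h1
  have hdiv : ((q + 1 : ℕ) : ℤ) ∣ s := by
    have h1 : β ^ (s * ((q - 1 : ℕ) : ℤ)) = 1 := by
      rw [zpow_mul, hs, zpow_natCast, hduq]
    have h2 : ((q ^ 2 - 1 : ℕ) : ℤ) ∣ s * ((q - 1 : ℕ) : ℤ) := by
      rw [← hob]; exact orderOf_dvd_iff_zpow_eq_one.mpr h1
    rw [hq21] at h2
    obtain ⟨t, ht⟩ := h2
    refine ⟨t, ?_⟩
    have hq1 : ((q - 1 : ℕ) : ℤ) ≠ 0 := by
      have : (1 : ℕ) ≤ q - 1 := by omega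
      exact_mod_cast (by omega : (q : ℕ) - 1 ≠ 0)
    apply mul_right_cancel₀ hq1
    push_cast at ht ⊢
    linarith [ht]
  obtain ⟨t, ht⟩ := hdiv   -- s = (q+1) * t
  -- t is odd
  have htodd : Odd t := by
    by_contra hev
    rw [Int.not_odd_iff_even] at hev
    obtain ⟨u0, hu0⟩ := hev  -- t = u0 + u0
    apply hns
    refine ⟨((β ^ (((q + 1 : ℕ) : ℤ) * u0) : Fˣ) : F), ?_, ?_⟩
    · have hpow : (β ^ (((q + 1 : ℕ) : ℤ) * u0)) ^ (q - 1) = 1 := by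
        rw [← zpow_natCast _ (q - 1), ← zpow_mul]
        have : ((q + 1 : ℕ) : ℤ) * u0 * ((q - 1 : ℕ) : ℤ) = ((q ^ 2 - 1 : ℕ) : ℤ) * u0 := by
          rw [hq21]; push_cast [show 1 ≤ q by omega, show 1 ≤ q^2 by nlinarith]; ring
        rw [this, zpow_mul, zpow_natCast, ← hob, pow_orderOf_eq_one, one_zpow]
      have hq' : (β ^ (((q + 1 : ℕ) : ℤ) * u0)) ^ q = β ^ (((q + 1 : ℕ) : ℤ) * u0) := by
        calc (β ^ (((q + 1 : ℕ) : ℤ) * u0)) ^ q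
            = (β ^ (((q + 1 : ℕ) : ℤ) * u0)) ^ (q - 1) * (β ^ (((q + 1 : ℕ) : ℤ) * u0)) := by
              rw [← pow_succ]; congr 1; omega
          _ = β ^ (((q + 1 : ℕ) : ℤ) * u0) := by rw [hpow, one_mul]
      rw [← Units.val_pow_eq_pow_val, hq']
    · have : (β ^ (((q + 1 : ℕ) : ℤ) * u0)) ^ 2 = du := by
        rw [← zpow_natCast _ 2, ← zpow_mul, ← hs, ht, hu0]
        congr 1; push_cast; ring
      rw [← Units.val_pow_eq_pow_val, this, hdu, Units.val_mk0]
  -- α^(q-1) = -1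
  have hde : du ^ e = -1 := by
    rw [← hs, ht, ← zpow_natCast _ e, ← zpow_mul]
    have : ((q + 1 : ℕ) : ℤ) * t * (e : ℤ) = ((e * (q + 1) : ℕ) : ℤ) * t := by
      push_cast; ring
    rw [this, zpow_mul, zpow_natCast, hhalf]
    obtain ⟨u0, hu0⟩ := htodd
    rw [hu0, zpow_add, zpow_mul]
    have h1 : ((-1 : Fˣ)) ^ (2 : ℤ) = 1 := by
      rw [show (2 : ℤ) = ((2 : ℕ) : ℤ) from rfl, zpow_natCast]
      simp
    rw [h1, one_zpow, zpow_one, one_mul]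
  have hα0 : α ≠ 0 := by
    intro h; rw [h] at hα; simp at hα; exact hd0 hα.symm
  have hαq1 : α ^ (q - 1) = -1 := by
    have h1 : α ^ (q - 1) = (α ^ 2) ^ e := by
      rw [← pow_mul]; congr 1; omega
    have h2 : ((du ^ e : Fˣ) : F) = d ^ e := by
      rw [Units.val_pow_eq_pow_val, hdu, Units.val_mk0]
    rw [h1, hα, ← h2, hde, Units.val_neg, Units.val_one]
  have hαq : α ^ q = -α := by
    have : α ^ q = α ^ (q - 1) * α := by rw [← pow_succ]; congr 1; omega
    rw [this, hαq1]; ring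
  -- -1 is an m-th power
  have hnegone : ∃ ε : Fˣ, ε ^ m = -1 := by
    refine ⟨β ^ (e * r), ?_⟩
    rw [← pow_mul, ← hhalf]
    congr 1
    rw [mul_assoc, mul_comm r m, ← hr]
  have hsymm : ∀ x y : F, AdjGP m x y → AdjGP m y x := by
    rintro x y ⟨δ, hδ⟩
    obtain ⟨ε, hε⟩ := hnegone
    refine ⟨ε * δ, ?_⟩
    have hεF : ((ε : F)) ^ m = -1 := by
      rw [← Units.val_pow_eq_pow_val, hε, Units.val_neg, Units.val_one]
    rw [Units.val_mul, mul_pow, hεF, hδ]; ring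
  -- main key lemma
  have hNpos : 0 < (q - 1) * r := Nat.mul_pos (by omega) (by omega)
  have hmN : Nat.card Fˣ = m * ((q - 1) * r) := by
    rw [hcu, hq21, hr]; ring
  have key : ∀ j : ℕ, ((ω : F) ^ (m * j) ≠ 1) →
      ∃ δ : Fˣ, ((δ : F)) ^ m = α * ((ω : F) ^ (m * j) - 1) := by
    intro j hj
    set u : Fˣ := ω ^ (m * j) with hu
    have huF : ((u : F)) = (ω : F) ^ (m * j) := Units.val_pow_eq_pow_val ω (m * j)
    have huq1 : u ^ (q + 1) = 1 := by
      rw [hu, ← pow_mul, mul_comm (m * j) (q + 1), pow_mul, hω1, one_pow]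
    have huq : u ^ q = u⁻¹ := by
      apply eq_inv_of_mul_eq_one_left
      rw [← pow_succ]
      exact huq1
    have hune : (u : F) ≠ 1 := by rw [huF]; exact hj
    set z : F := (u : F) - 1 with hz
    have hz0 : z ≠ 0 := sub_ne_zero.mpr hune
    have hinv : ((u⁻¹ : Fˣ) : F) * (u : F) = 1 := by
      rw [← Units.val_mul, inv_mul_cancel u, Units.val_one]
    have hyq : (α * z) ^ q = ((u⁻¹ : Fˣ) : F) * (α * z) := by
      rw [mul_pow, hαq, hz, hfrob, one_pow, ← Units.val_pow_eq_pow_val, huq]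
      linear_combination -α * hinv
    have hzu : α * z ≠ 0 := mul_ne_zero hα0 hz0
    set y : Fˣ := Units.mk0 (α * z) hzu with hy
    have hyq' : y ^ q = u⁻¹ * y := by
      apply Units.ext
      rw [Units.val_pow_eq_pow_val, Units.val_mul, hy, Units.val_mk0]
      exact hyq
    have hy1 : y ^ (q - 1) = u⁻¹ := by
      apply mul_right_cancel (b := y)
      rw [← pow_succ, show q - 1 + 1 = q by omega]
      exact hyq'
    have hur : u ^ r = 1 := by
      rw [hu, ← pow_mul, show m * j * r = (q + 1) * j by rw [hr]; ring, pow_mul, hω1, one_pow]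
    have hyN : y ^ ((q - 1) * r) = 1 := by
      rw [pow_mul, hy1, inv_pow, hur, inv_one]
    obtain ⟨δ, hδ⟩ := aux_root β y hβ m ((q - 1) * r) hNpos hmN hyN
    refine ⟨δ, ?_⟩
    rw [← Units.val_pow_eq_pow_val, hδ, hy, Units.val_mk0, hz, huF]
  -- pairwise adjacency of α Q0
  have mainAdj : ∀ a b : ℕ, b ≤ a → α * (ω : F) ^ (m * a) ≠ α * (ω : F) ^ (m * b) →
      AdjGP m (α * (ω : F) ^ (m * a)) (α * (ω : F) ^ (m * b)) := by
    intro a b hba hne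
    have hsplit : m * a = m * b + m * (a - b) := by
      rw [← Nat.mul_add]; congr 1; omega
    have hne1 : (ω : F) ^ (m * (a - b)) ≠ 1 := by
      intro h1
      apply hne
      rw [hsplit, pow_add, h1, mul_one]
    obtain ⟨δ, hδ⟩ := key (a - b) hne1
    refine ⟨ω ^ b * δ, ?_⟩
    rw [Units.val_mul, mul_pow, hδ, Units.val_pow_eq_pow_val, ← pow_mul, hsplit, pow_add]
    ring
  have hmem : ∀ x ∈ Qcoset q m β 0, ∃ k : ℕ, x = (ω : F) ^ (m * k) := by
    rintro x ⟨k, rfl⟩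
    exact ⟨k, by rw [zero_add, ← hωdef, Units.val_pow_eq_pow_val]⟩
  have hpair : Set.Pairwise ((α * ·) '' Qcoset q m β 0) (AdjGP m) := by
    rintro x ⟨x0, hx0, rfl⟩ y ⟨y0, hy0, rfl⟩ hne
    obtain ⟨k1, rfl⟩ := hmem x0 hx0
    obtain ⟨k2, rfl⟩ := hmem y0 hy0
    simp only at hne ⊢
    rcases le_total k2 k1 with h | h
    · exact mainAdj k1 k2 h hne
    · exact hsymm _ _ (mainAdj k2 k1 h (Ne.symm hne))
  -- adjacency to zero (assuming m ∣ (q+1)/2)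
  have hA : ∃ A : Fˣ, (A : F) = α := ⟨Units.mk0 α hα0, rfl⟩
  have zeroAdj : (m ∣ (q + 1) / 2) → ∀ k : ℕ,
      ∃ δ : Fˣ, ((δ : F)) ^ m = α * (ω : F) ^ (m * k) := by
    intro hdvd2 k
    have hreven : Even r := by
      obtain ⟨t2, ht2⟩ := hdvd2
      have hq2 : q + 1 = m * (2 * t2) := by
        have h3 : q + 1 = 2 * (m * t2) := by omega
        rw [h3]; ring
      have hr2 : r = 2 * t2 := Nat.eq_of_mul_eq_mul_left (by omega : 0 < m) (hr.symm.trans hq2)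
      exact ⟨t2, by omega⟩
    obtain ⟨A, hAα⟩ := hA
    have hAq : A ^ (q - 1) = -1 := by
      apply Units.ext
      rw [Units.val_pow_eq_pow_val, hAα, Units.val_neg, Units.val_one, hαq1]
    have hx1 : (A * ω ^ (m * k)) ^ ((q - 1) * r) = 1 := by
      rw [mul_pow]
      have h1 : A ^ ((q - 1) * r) = 1 := by
        rw [pow_mul, hAq, Even.neg_one_pow hreven]
      have h2 : (ω ^ (m * k)) ^ ((q - 1) * r) = 1 := by
        rw [← pow_mul, show m * k * ((q - 1) * r) = (q + 1) * (k * (q - 1)) by rw [hr]; ring,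
          pow_mul, hω1, one_pow]
      rw [h1, h2, one_mul]
    obtain ⟨δ, hδ⟩ := aux_root β (A * ω ^ (m * k)) hβ m ((q - 1) * r) hNpos hmN hx1
    refine ⟨δ, ?_⟩
    rw [← Units.val_pow_eq_pow_val, hδ, Units.val_mul, hAα, Units.val_pow_eq_pow_val]
  -- cardinality
  set g : F := ((ω ^ m : Fˣ) : F) with hg
  have hog : orderOf g = r := by
    rw [hg, orderOf_units, orderOf_pow, homega, Nat.gcd_eq_right ⟨r, hr⟩, hr,
      Nat.mul_div_cancel_left _ (by omega : 0 < m)]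
  have hgpow : ∀ k : ℕ, g ^ k = (ω : F) ^ (m * k) := by
    intro k
    rw [hg, Units.val_pow_eq_pow_val, ← pow_mul]
  have hQ : Qcoset q m β 0 = (fun k : ℕ => g ^ k) '' Set.Iio r := by
    ext x
    constructor
    · rintro ⟨k, rfl⟩
      refine ⟨k % r, Nat.mod_lt _ (by omega), ?_⟩
      show g ^ (k % r) = _
      rw [← hog, pow_mod_orderOf]
      simp only [hgpow, hωdef, zero_add, Units.val_pow_eq_pow_val, ← pow_mul]
    · rintro ⟨k, -, rfl⟩
      refine ⟨k, ?_⟩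
      show g ^ k = (((β ^ (q - 1)) ^ (0 + m * k) : Fˣ) : F)
      simp only [hgpow, hωdef, zero_add, Units.val_pow_eq_pow_val, ← pow_mul]
  have hcardQ : (Qcoset q m β 0).ncard = r := by
    rw [hQ, Set.ncard_image_of_injOn (hog ▸ pow_injOn_Iio_orderOf),
      ← Finset.coe_range, Set.ncard_coe_finset, Finset.card_range]
  have hcardS : ((α * ·) '' Qcoset q m β 0).ncard = r := by
    rw [Set.ncard_image_of_injective _ (mul_right_injective₀ hα0), hcardQ]
  have h0S : (0 : F) ∉ (α * ·) '' Qcoset q m β 0 := by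
    rintro ⟨x0, hx0, h⟩
    obtain ⟨k, rfl⟩ := hmem x0 hx0
    simp only at h
    exact (mul_ne_zero hα0 (pow_ne_zero _ (Units.ne_zero ω))) h
  have hrq : (q + 1) / m = r := by rw [hr, Nat.mul_div_cancel_left _ (by omega : 0 < m)]
  constructor
  · intro _
    exact ⟨hpair, by rw [hcardS, hrq]⟩
  · intro hdvd2
    constructor
    · rintro x hx y hy hne
      rcases hx with hx | hx <;> rcases hy with hy | hy
      · simp only [Set.mem_singleton_iff] at hx hy; exact absurd (hx.trans hy.symm) hne
      · simp only [Set.mem_singleton_iff] at hx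
        subst hx
        obtain ⟨y0, hy0, rfl⟩ := hy
        obtain ⟨k, rfl⟩ := hmem y0 hy0
        apply hsymm
        obtain ⟨δ, hδ⟩ := zeroAdj hdvd2 k
        exact ⟨δ, by rw [hδ]; simp⟩
      · simp only [Set.mem_singleton_iff] at hy
        subst hy
        obtain ⟨x0, hx0, rfl⟩ := hx
        obtain ⟨k, rfl⟩ := hmem x0 hx0
        obtain ⟨δ, hδ⟩ := zeroAdj hdvd2 k
        exact ⟨δ, by rw [hδ]; simp⟩
      · exact hpair hx hy hne
    · rw [Set.singleton_union, Set.ncard_insert_of_notMem h0S, hcardS]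
      have : q + 1 + m = m * (r + 1) := by rw [Nat.mul_add, ← hr]; omega
      rw [this, Nat.mul_div_cancel_left _ (by omega : 0 < m)]
end

section
/- Let q be an odd prime power, m | (q+1), 2 ≤ m ≤ (q+1)/3, and let u, v be distinct elements of F_{q^2} \ F_q with u - v ∈ F_q and N(u) = N(v), where N(u) = {x ∈ F_q : u - x is an m-th power in F_{q^2}}. Then N(u) is a union of additive cosets of (u-v)F_p in F_q; in particular p divides m - 1. -/
open Finset Polynomial

lemma aux_dvd_card {F : Type*} [Field F] [DecidableEq F] (p : ℕ) (hp : p.Prime)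
    [CharP F p] (t : F) (ht : t ≠ 0) :
    ∀ s : Finset F, (∀ x ∈ s, x + t ∈ s) → p ∣ s.card := by
  intro s
  induction s using Finset.strongInduction with
  | _ s ih =>
    intro hs
    rcases s.eq_empty_or_nonempty with rfl | ⟨x, hx⟩
    · simp
    · have hmem : ∀ k : ℕ, x + t * (k : F) ∈ s := by
        intro k; induction k with
        | zero => simpa using hx
        | succ k ihk =>
            have h := hs _ ihk
            have : x + t * ((k : F) + 1) = x + t * (k : F) + t := by ring
            rw [Nat.cast_succ, this]; exact h
      set O : Finset F := (Finset.range p).image (fun k : ℕ => x + t * (k : F)) with hO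
      have hinj : Set.InjOn (fun k : ℕ => x + t * (k : F)) (Finset.range p) := by
        intro a ha b hb hab
        simp only [Finset.coe_range, Set.mem_Iio] at ha hb
        have h1 : t * (a : F) = t * (b : F) := by
          have := hab; simp only at this; linear_combination this
        have h2 : (a : F) = (b : F) := mul_left_cancel₀ ht h1
        exact CharP.natCast_injOn_Iio F p ha hb h2
      have hOcard : O.card = p := by
        rw [hO, Finset.card_image_of_injOn hinj, Finset.card_range]
      have hOsub : O ⊆ s := by
        intro y hy
        rw [hO, Finset.mem_image] at hy
        obtain ⟨k, _, rfl⟩ := hy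
        exact hmem k
      have hxO : x ∈ O := by
        rw [hO, Finset.mem_image]
        exact ⟨0, Finset.mem_range.2 hp.pos, by simp⟩
      have hssub : s \ O ⊂ s := Finset.sdiff_ssubset hOsub ⟨x, hxO⟩
      have hstep' : ∀ y ∈ s \ O, y + t ∈ s \ O := by
        intro y hy
        rw [Finset.mem_sdiff] at hy ⊢
        refine ⟨hs _ hy.1, fun hyO => hy.2 ?_⟩
        rw [hO, Finset.mem_image] at hyO
        obtain ⟨k, hk, hke⟩ := hyO
        rw [Finset.mem_range] at hk
        rcases Nat.eq_zero_or_pos k with rfl | hk0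
        · -- y + t = x, so y = x - t = x + t*(p-1)
          rw [hO, Finset.mem_image]
          refine ⟨p - 1, Finset.mem_range.2 (by omega), ?_⟩
          have hp0 : ((p : ℕ) : F) = 0 := CharP.cast_eq_zero F p
          have hcast : ((p - 1 : ℕ) : F) = (p : F) - 1 := by
            have : p - 1 + 1 = p := by omega
            rw [← this]; push_cast; ring
          simp only [Nat.cast_zero, mul_zero, add_zero] at hke
          rw [hcast, hp0]
          linear_combination hke
        · rw [hO, Finset.mem_image]
          refine ⟨k - 1, Finset.mem_range.2 (by omega), ?_⟩
          have hcast : ((k - 1 : ℕ) : F) = (k : F) - 1 := by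
            have : k - 1 + 1 = k := by omega
            rw [← this]; push_cast; ring
          rw [hcast]
          linear_combination hke
      have hdvd' := ih (s \ O) hssub hstep'
      have hcard : (s \ O).card = s.card - p := by
        rw [Finset.card_sdiff_of_subset hOsub, hOcard]
      have hple : p ≤ s.card := hOcard ▸ Finset.card_le_card hOsub
      have : s.card = (s \ O).card + p := by omega
      rw [this]; exact Nat.dvd_add hdvd' dvd_rfl


/-- The `F_q`-neighbourhood `N(w) = {x ∈ F_q : w - x is an m-th power in F_{q^2}}`,
with `F_q` identified with `{x | x^q = x}`. -/
def Nbhd (q m : ℕ) {F : Type*} [Field F] (w : F) : Set F :=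
  {x | x ^ q = x ∧ ∃ y : F, y ≠ 0 ∧ y ^ m = w - x}

/-- If `u ≠ v` lie in `F_{q^2} \ F_q`, `u - v ∈ F_q`, and `N(u) = N(v)`,
then `N(u)` is a union of additive cosets of `(u-v)F_p` in `F_q`; in particular
`p ∣ m - 1`. -/
theorem same_nbhd_horizontal
    (p n q m : ℕ) (hp : p.Prime) (hpo : Odd p) (hn : 0 < n) (hqpn : q = p ^ n)
    (hdvd : m ∣ q + 1) (hm2 : 2 ≤ m) (hm3 : 3 * m ≤ q + 1)
    (F : Type*) [Field F] [Fintype F] (hF : Fintype.card F = q ^ 2)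
    (u v : F) (huv : u ≠ v) (hu : u ^ q ≠ u) (hv : v ^ q ≠ v)
    (huvFq : (u - v) ^ q = u - v)
    (hN : Nbhd q m u = Nbhd q m v) :
    (∀ x ∈ Nbhd q m u, ∀ c : F, c ^ p = c → x + (u - v) * c ∈ Nbhd q m u) ∧
    p ∣ (m - 1) := by
  classical
  have hp1 : 1 < p := hp.one_lt
  have hq1 : 1 < q := by rw [hqpn]; exact Nat.one_lt_pow hn.ne' hp1
  have hq2 : 1 < q ^ 2 := Nat.one_lt_pow two_ne_zero hq1
  haveI hfact : Fact p.Prime := ⟨hp⟩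
  -- characteristic
  haveI hcharF : CharP F p := by
    haveI : CharP F (ringChar F) := ringChar.charP F
    obtain ⟨k, hrp, hcard⟩ := FiniteField.card F (ringChar F)
    have h1 : (ringChar F) ^ (k : ℕ) = p ^ (n * 2) := by
      rw [← hcard, hF, hqpn, ← pow_mul]
    have hpd : p ∣ (ringChar F) ^ (k : ℕ) := by
      rw [h1]; exact dvd_pow_self p (by positivity)
    have hpr : p = ringChar F :=
      (Nat.prime_dvd_prime_iff_eq hp hrp).mp (hp.dvd_of_dvd_pow hpd)
    exact hpr ▸ ‹CharP F (ringChar F)›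
  set t := u - v with htdef
  have ht : t ≠ 0 := sub_ne_zero.mpr huv
  have hfrobadd : ∀ a b : F, (a + b) ^ q = a ^ q + b ^ q := by
    intro a b; rw [hqpn]; exact add_pow_char_pow a b p n
  have hfrobsub : ∀ a b : F, (a - b) ^ q = a ^ q - b ^ q := by
    intro a b; rw [hqpn]; exact sub_pow_char_pow a b n
  -- Part 1, single step
  have hstep : ∀ x ∈ Nbhd q m u, x + t ∈ Nbhd q m u := by
    intro x hx
    have hx' : x ∈ Nbhd q m v := hN ▸ hx
    obtain ⟨hxq, y, hy0, hym⟩ := hx'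
    refine ⟨?_, y, hy0, ?_⟩
    · rw [hfrobadd, hxq, htdef, huvFq]
    · rw [hym, htdef]; ring
  have hstepN : ∀ x ∈ Nbhd q m u, ∀ k : ℕ, x + t * (k : F) ∈ Nbhd q m u := by
    intro x hx k
    induction k with
    | zero => simpa using hx
    | succ k ihk =>
        have h := hstep _ ihk
        have he : x + t * ((k : F) + 1) = x + t * (k : F) + t := by ring
        rw [Nat.cast_succ, he]; exact h
  -- prime field identification
  have hprime : ∀ c : F, c ^ p = c → ∃ k : ℕ, k < p ∧ c = (k : F) := by
    intro c hc
    set φ := ZMod.castHom (dvd_refl p) F with hφdef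
    have hφinj : Function.Injective φ := φ.injective
    set S := univ.filter (fun x : F => x ^ p = x) with hSdef
    set T := (univ : Finset (ZMod p)).image φ with hTdef
    have hTS : T ⊆ S := by
      intro z hz
      rw [hTdef, Finset.mem_image] at hz
      obtain ⟨a, _, rfl⟩ := hz
      rw [hSdef, Finset.mem_filter]
      exact ⟨Finset.mem_univ _, by rw [← map_pow, ZMod.pow_card]⟩
    have hTcard : T.card = p := by
      rw [hTdef, Finset.card_image_of_injective _ hφinj, Finset.card_univ, ZMod.card]
    have hdeg' : (X ^ p - X : F[X]).degree = p := by
      rw [Polynomial.degree_sub_eq_left_of_degree_lt, Polynomial.degree_X_pow]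
      rw [Polynomial.degree_X_pow, Polynomial.degree_X]
      exact_mod_cast hp1
    have hP : (X ^ p - X : F[X]) ≠ 0 := by
      intro h; rw [h] at hdeg'; simp at hdeg'
    have hdeg : (X ^ p - X : F[X]).natDegree = p :=
      Polynomial.natDegree_eq_of_degree_eq_some hdeg'
    have hScard : S.card ≤ p := by
      have hsub : S ⊆ (X ^ p - X : F[X]).roots.toFinset := by
        intro z hz
        rw [hSdef, Finset.mem_filter] at hz
        rw [Multiset.mem_toFinset, Polynomial.mem_roots hP]
        simp [Polynomial.IsRoot, sub_eq_zero, hz.2]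
      calc S.card ≤ (X ^ p - X : F[X]).roots.toFinset.card := Finset.card_le_card hsub
        _ ≤ Multiset.card (X ^ p - X : F[X]).roots := Multiset.toFinset_card_le _
        _ ≤ (X ^ p - X : F[X]).natDegree := Polynomial.card_roots' _
        _ = p := hdeg
    have hST : T = S := Finset.eq_of_subset_of_card_le hTS (by omega)
    have hcT : c ∈ T := by
      rw [hST, hSdef, Finset.mem_filter]; exact ⟨Finset.mem_univ _, hc⟩
    rw [hTdef, Finset.mem_image] at hcT
    obtain ⟨a, _, ha⟩ := hcT
    refine ⟨a.val, a.val_lt, ?_⟩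
    rw [← ha, ← map_natCast φ a.val, ZMod.natCast_val, ZMod.cast_id]
  have part1 : ∀ x ∈ Nbhd q m u, ∀ c : F, c ^ p = c → x + t * c ∈ Nbhd q m u := by
    intro x hx c hc
    obtain ⟨k, _, rfl⟩ := hprime c hc
    exact hstepN x hx k
  refine ⟨part1, ?_⟩
  -- ===== Part 2 =====
  have hNfac : q ^ 2 - 1 = (q - 1) * (q + 1) := by
    obtain ⟨r, rfl⟩ : ∃ r, q = r + 1 := ⟨q - 1, by omega⟩
    simp only [Nat.add_sub_cancel]
    exact Nat.sub_eq_of_eq_add (by ring)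
  have hN0 : 0 < q ^ 2 - 1 := by omega
  -- roots of unity count
  have hroots : ∀ d : ℕ, 0 < d → d ∣ q ^ 2 - 1 →
      (univ.filter fun x : F => x ^ d = 1).card = d := by
    intro d hd0 hdN
    obtain ⟨g, hg⟩ := IsCyclic.exists_generator (α := Fˣ)
    have hog : orderOf g = q ^ 2 - 1 := by
      rw [orderOf_eq_card_of_forall_mem_zpowers hg, Nat.card_eq_fintype_card,
        Fintype.card_units, hF]
    have hζ : orderOf (g ^ ((q ^ 2 - 1) / d)) = d := by
      have h := orderOf_pow_orderOf_div (x := g) (n := d)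
        (by rw [hog]; omega) (by rw [hog]; exact hdN)
      rwa [hog] at h
    have hprim : IsPrimitiveRoot ((g ^ ((q ^ 2 - 1) / d) : Fˣ) : F) d := by
      rw [IsPrimitiveRoot.coe_units_iff]
      have h0 := IsPrimitiveRoot.orderOf (g ^ ((q ^ 2 - 1) / d))
      rwa [hζ] at h0
    have heq : (univ.filter fun x : F => x ^ d = 1) = Polynomial.nthRootsFinset d (1 : F) := by
      ext z
      rw [Finset.mem_filter, Polynomial.mem_nthRootsFinset hd0 (1 : F)]
      simp
    rw [heq, hprim.card_nthRootsFinset]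
  have hm0 : 0 < m := by omega
  have hmN : m ∣ q ^ 2 - 1 := by rw [hNfac]; exact Dvd.dvd.mul_left hdvd (q - 1)
  -- the set of nonzero m-th powers
  set Hs := univ.filter (fun z : F => ∃ y : F, y ≠ 0 ∧ y ^ m = z) with hHsdef
  -- fiber bound for the m-th power map
  have hfib : ∀ (s : Finset F), ∀ z ∈ s.image (fun y => y ^ m),
      (s.filter (fun y => y ^ m = z)).card ≤ m := by
    intro s z _
    have hsub : s.filter (fun y => y ^ m = z) ⊆ (Polynomial.nthRoots m z).toFinset := by
      intro y hy
      rw [Finset.mem_filter] at hy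
      rw [Multiset.mem_toFinset, Polynomial.mem_nthRoots hm0]
      exact hy.2
    calc (s.filter (fun y => y ^ m = z)).card
        ≤ (Polynomial.nthRoots m z).toFinset.card := Finset.card_le_card hsub
      _ ≤ Multiset.card (Polynomial.nthRoots m z) := Multiset.toFinset_card_le _
      _ ≤ m := Polynomial.card_nthRoots m z
  have hHsCard : Hs.card = (q ^ 2 - 1) / m := by
    have hNm0 : 0 < (q ^ 2 - 1) / m := Nat.div_pos (Nat.le_of_dvd hN0 hmN) hm0
    have hNm_card : (univ.filter fun z : F => z ^ ((q ^ 2 - 1) / m) = 1).card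
        = (q ^ 2 - 1) / m := hroots _ hNm0 (Nat.div_dvd_of_dvd hmN)
    have hHsA : Hs ⊆ univ.filter (fun z : F => z ^ ((q ^ 2 - 1) / m) = 1) := by
      intro z hz
      rw [hHsdef, Finset.mem_filter] at hz
      obtain ⟨_, y, hy0, rfl⟩ := hz
      rw [Finset.mem_filter]
      refine ⟨Finset.mem_univ _, ?_⟩
      rw [← pow_mul, Nat.mul_div_cancel' hmN]
      have h := FiniteField.pow_card_sub_one_eq_one y hy0
      rwa [hF] at h
    have hHsCardLe : Hs.card ≤ (q ^ 2 - 1) / m := by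
      rw [← hNm_card]; exact Finset.card_le_card hHsA
    have himg : (univ.filter (fun y : F => y ≠ 0)).image (fun y => y ^ m) = Hs := by
      ext z
      rw [hHsdef, Finset.mem_image, Finset.mem_filter]
      constructor
      · rintro ⟨y, hy, rfl⟩
        rw [Finset.mem_filter] at hy
        exact ⟨Finset.mem_univ _, y, hy.2, rfl⟩
      · rintro ⟨_, y, hy0, rfl⟩
        exact ⟨y, Finset.mem_filter.2 ⟨Finset.mem_univ _, hy0⟩, rfl⟩
    have hlow := Finset.card_le_mul_card_image
      (univ.filter (fun y : F => y ≠ 0)) m (hfib _)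
    rw [himg] at hlow
    have hne : (univ.filter (fun y : F => y ≠ 0)).card = q ^ 2 - 1 := by
      rw [Finset.filter_ne', Finset.card_erase_of_mem (Finset.mem_univ 0),
        Finset.card_univ, hF]
    rw [hne] at hlow
    have h1 : m * Hs.card ≤ m * ((q ^ 2 - 1) / m) := Nat.mul_le_mul_left m hHsCardLe
    rw [Nat.mul_div_cancel' hmN] at h1
    have h2 : m * Hs.card = q ^ 2 - 1 := le_antisymm h1 hlow
    rw [← h2, Nat.mul_div_cancel_left _ hm0]
  -- every (q-1)-th root of unity is an m-th power
  set K := univ.filter (fun x : F => x ^ (q - 1) = 1) with hKdef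
  have hKcard : K.card = q - 1 := hroots _ (by omega) ⟨q + 1, hNfac⟩
  have hKH : ∀ lam : F, lam ^ (q - 1) = 1 → ∃ y : F, y ≠ 0 ∧ y ^ m = lam := by
    intro lam hlam
    set B := univ.filter (fun y : F => y ^ (m * (q - 1)) = 1) with hBdef
    have hBcard : B.card = m * (q - 1) := by
      refine hroots _ (Nat.mul_pos hm0 (by omega)) ?_
      rw [hNfac, mul_comm (q - 1) (q + 1)]
      exact mul_dvd_mul hdvd dvd_rfl
    have hBK : B.image (fun y => y ^ m) ⊆ K := by
      intro z hz
      rw [Finset.mem_image] at hz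
      obtain ⟨y, hy, rfl⟩ := hz
      rw [hBdef, Finset.mem_filter] at hy
      rw [hKdef, Finset.mem_filter]
      exact ⟨Finset.mem_univ _, by rw [← pow_mul]; exact hy.2⟩
    have hble := Finset.card_le_mul_card_image B m (hfib _)
    rw [hBcard] at hble
    have hKle : q - 1 ≤ (B.image (fun y => y ^ m)).card :=
      Nat.le_of_mul_le_mul_left hble hm0
    have hBKeq : B.image (fun y => y ^ m) = K :=
      Finset.eq_of_subset_of_card_le hBK (by omega)
    have hlamK : lam ∈ B.image (fun y => y ^ m) := by
      rw [hBKeq, hKdef, Finset.mem_filter]; exact ⟨Finset.mem_univ _, hlam⟩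
    rw [Finset.mem_image] at hlamK
    obtain ⟨y, hy, rfl⟩ := hlamK
    rw [hBdef, Finset.mem_filter] at hy
    refine ⟨y, fun h0 => ?_, rfl⟩
    rw [h0, zero_pow (Nat.mul_pos hm0 (by omega)).ne'] at hy
    exact zero_ne_one hy.2
  -- Frobenius-difference facts
  set δ := u ^ q - u with hδdef
  have hδ : δ ≠ 0 := sub_ne_zero.mpr (fun h => hu h)
  have hq2pow : ∀ a : F, (a ^ q) ^ q = a := by
    intro a
    rw [← pow_mul, ← sq]
    have h := FiniteField.pow_card a
    rwa [hF] at h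
  have hδq : δ ^ q = -δ := by
    rw [hδdef, hfrobsub, hq2pow]; ring
  -- K-element basics
  have hKq : ∀ lam : F, lam ^ (q - 1) = 1 → lam ≠ 0 ∧ lam ^ q = lam := by
    intro lam hlam
    have hlam0 : lam ≠ 0 := by
      intro h0; rw [h0, zero_pow (by omega : q - 1 ≠ 0)] at hlam
      exact zero_ne_one hlam
    refine ⟨hlam0, ?_⟩
    have : lam ^ q = lam ^ (q - 1) * lam := by
      rw [← pow_succ]; congr 1; omega
    rw [this, hlam, one_mul]
  have hKofq : ∀ lam : F, lam ≠ 0 → lam ^ q = lam → lam ^ (q - 1) = 1 := by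
    intro lam hlam0 hlamq
    have h : lam ^ (q - 1) * lam = 1 * lam := by
      rw [← pow_succ, one_mul]
      have : q - 1 + 1 = q := by omega
      rw [this, hlamq]
    exact mul_right_cancel₀ hlam0 h
  -- the two finsets of the bijection
  set LH := univ.filter
    (fun w : F => w ^ q - w = δ ∧ ∃ y : F, y ≠ 0 ∧ y ^ m = w) with hLHdef
  set HnF := univ.filter
    (fun z : F => (∃ y : F, y ≠ 0 ∧ y ^ m = z) ∧ z ^ q ≠ z) with hHnFdef
  have hbij : LH.card * K.card = HnF.card := by
    rw [← Finset.card_product]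
    refine Finset.card_bij (fun (a : F × F) _ => a.1 * a.2) ?_ ?_ ?_
    · rintro ⟨w, lam⟩ ha
      rw [Finset.mem_product, hLHdef, hKdef, Finset.mem_filter, Finset.mem_filter] at ha
      obtain ⟨⟨-, hw, y1, hy1, hy1m⟩, -, hlam⟩ := ha
      obtain ⟨hlam0, hlamq⟩ := hKq lam hlam
      obtain ⟨y2, hy2, hy2m⟩ := hKH lam hlam
      rw [hHnFdef, Finset.mem_filter]
      refine ⟨Finset.mem_univ _, ⟨y1 * y2, mul_ne_zero hy1 hy2, by
        rw [mul_pow, hy1m, hy2m]⟩, ?_⟩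
      intro heq
      rw [mul_pow, hlamq] at heq
      have : (w ^ q - w) * lam = 0 := by ring_nf; linear_combination heq
      rw [hw] at this
      exact hδ (by
        rcases mul_eq_zero.mp this with h | h
        · exact h
        · exact absurd h hlam0)
    · rintro ⟨w, lam⟩ ha ⟨w', lam'⟩ hb hab
      rw [Finset.mem_product, hLHdef, hKdef, Finset.mem_filter, Finset.mem_filter] at ha hb
      obtain ⟨⟨-, hw, -⟩, -, hlam⟩ := ha
      obtain ⟨⟨-, hw', -⟩, -, hlam'⟩ := hb
      obtain ⟨hlam0, hlamq⟩ := hKq lam hlam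
      obtain ⟨hlam0', hlamq'⟩ := hKq lam' hlam'
      simp only at hab
      have hq' : w ^ q * lam = w' ^ q * lam' := by
        have := congrArg (fun z : F => z ^ q) hab
        simpa only [mul_pow, hlamq, hlamq'] using this
      have hδδ : δ * lam = δ * lam' := by
        have h1 : (w ^ q - w) * lam = (w' ^ q - w') * lam' := by
          rw [sub_mul, sub_mul, hq', hab]
        rwa [hw, hw'] at h1
      have hll : lam = lam' := mul_left_cancel₀ hδ hδδ
      have hww : w = w' := by
        rw [hll] at hab
        exact mul_right_cancel₀ hlam0' hab
      rw [Prod.mk.injEq]; exact ⟨hww, hll⟩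
    · intro z hz
      rw [hHnFdef, Finset.mem_filter] at hz
      obtain ⟨-, ⟨y, hy0, hym⟩, hzq⟩ := hz
      have hz0 : z ≠ 0 := by
        rw [← hym]; exact pow_ne_zero m hy0
      have hzz : z ^ q - z ≠ 0 := sub_ne_zero.mpr hzq
      set μ := δ / (z ^ q - z) with hμdef
      have hμ0 : μ ≠ 0 := div_ne_zero hδ hzz
      have hμq : μ ^ q = μ := by
        rw [hμdef, div_pow, hδq, hfrobsub, hq2pow]
        rw [show z - z ^ q = -(z ^ q - z) by ring, neg_div_neg_eq]
      have hμK : μ ^ (q - 1) = 1 := hKofq μ hμ0 hμq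
      refine ⟨⟨z * μ, μ⁻¹⟩, ?_, ?_⟩
      · rw [Finset.mem_product, hLHdef, hKdef, Finset.mem_filter, Finset.mem_filter]
        obtain ⟨y2, hy2, hy2m⟩ := hKH μ hμK
        refine ⟨⟨Finset.mem_univ _, ?_, y * y2, mul_ne_zero hy0 hy2, by
          rw [mul_pow, hym, hy2m]⟩, Finset.mem_univ _, ?_⟩
        · rw [mul_pow, hμq]
          have : z ^ q * μ - z * μ = (z ^ q - z) * μ := by ring
          rw [this, hμdef, mul_div_cancel₀ _ hzz]
        · rw [inv_pow, hμK, inv_one]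
      · simp only
        rw [mul_assoc, mul_inv_cancel₀ hμ0, mul_one]
  -- HnF card
  have hHsK : Hs.filter (fun z : F => z ^ q = z) = K := by
    ext z
    rw [hHsdef, hKdef, Finset.mem_filter, Finset.mem_filter, Finset.mem_filter]
    constructor
    · rintro ⟨⟨-, y, hy0, rfl⟩, hzq⟩
      exact ⟨Finset.mem_univ _, hKofq _ (pow_ne_zero m hy0) hzq⟩
    · rintro ⟨-, hz1⟩
      obtain ⟨hz0, hzq⟩ := hKq z hz1
      exact ⟨⟨Finset.mem_univ _, hKH z hz1⟩, hzq⟩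
  have hHnFeq : HnF = Hs.filter (fun z : F => ¬ z ^ q = z) := by
    ext z
    rw [hHnFdef, hHsdef, Finset.mem_filter, Finset.mem_filter, Finset.mem_filter]
    tauto
  have hHnFcard : HnF.card = (q ^ 2 - 1) / m - (q - 1) := by
    have hsplit := Finset.card_filter_add_card_filter_not
      (s := Hs) (p := fun z : F => z ^ q = z)
    rw [hHsK, hKcard, hHsCard] at hsplit
    rw [hHnFeq]
    omega
  -- N(u) and LH are in bijection
  set Ns := univ.filter (fun x : F => x ∈ Nbhd q m u) with hNsdef
  have hNsLH : Ns.card = LH.card := by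
    refine Finset.card_bij (fun x _ => u - x) ?_ ?_ ?_
    · intro x hx
      rw [hNsdef, Finset.mem_filter] at hx
      obtain ⟨-, hxq, y, hy0, hym⟩ := hx
      rw [hLHdef, Finset.mem_filter]
      refine ⟨Finset.mem_univ _, ?_, y, hy0, hym⟩
      rw [hfrobsub, hxq, hδdef]; ring
    · intro a _ b _ hab
      exact sub_right_injective hab
    · intro w hw
      rw [hLHdef, Finset.mem_filter] at hw
      obtain ⟨-, hwq, y, hy0, hym⟩ := hw
      refine ⟨u - w, ?_, by ring⟩
      rw [hNsdef, Finset.mem_filter]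
      refine ⟨Finset.mem_univ _, ?_, y, hy0, by rw [hym]; ring⟩
      rw [hfrobsub]
      have : w ^ q = w + δ := by linear_combination hwq
      rw [this, hδdef]; ring
  -- main cardinality computation
  have hs1 : 1 ≤ (q + 1) / m := Nat.div_pos (Nat.le_of_dvd (by omega) hdvd) hm0
  obtain ⟨s', hs'⟩ : ∃ s', (q + 1) / m = s' + 1 := ⟨(q + 1) / m - 1, by omega⟩
  have hNscard : Ns.card = (q + 1) / m - 1 := by
    have hb2 : LH.card * (q - 1) = HnF.card := by rw [← hKcard]; exact hbij
    have he : Ns.card * (q - 1) = (q ^ 2 - 1) / m - (q - 1) := by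
      rw [hNsLH, hb2, hHnFcard]
    have hdivfac : (q ^ 2 - 1) / m = (q - 1) * ((q + 1) / m) := by
      rw [hNfac, Nat.mul_div_assoc _ hdvd]
    rw [hdivfac, hs'] at he
    have he2 : Ns.card * (q - 1) = (q - 1) * s' := by
      rw [he, mul_add, mul_one, Nat.add_sub_cancel]
    have : (q - 1) * Ns.card = (q - 1) * s' := by rw [← he2]; ring
    have := Nat.eq_of_mul_eq_mul_left (by omega : 0 < q - 1) this
    omega
  -- p divides the cardinality
  have hNsinv : ∀ x ∈ Ns, x + t ∈ Ns := by
    intro x hx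
    rw [hNsdef, Finset.mem_filter] at hx ⊢
    exact ⟨Finset.mem_univ _, hstep x hx.2⟩
  have hpdvd : p ∣ Ns.card := aux_dvd_card p hp t ht Ns hNsinv
  rw [hNscard, hs'] at hpdvd
  simp only [Nat.add_sub_cancel] at hpdvd
  -- conclude p ∣ m - 1
  have hpq : p ∣ q := hqpn ▸ dvd_pow_self p hn.ne'
  have hsm : m * ((q + 1) / m) = q + 1 := Nat.mul_div_cancel' hdvd
  rw [hs'] at hsm
  have hqe : q = m * s' + (m - 1) := by
    rw [mul_add, mul_one] at hsm
    omega
  have hdm : p ∣ m * s' := Dvd.dvd.mul_left hpdvd m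
  have hms : m - 1 = q - m * s' := by omega
  rw [hms]
  exact Nat.dvd_sub hpq hdm
end

section
/- Let q be an odd prime power and m a divisor of q+1 with 2 ≤ m ≤ (q+1)/3. Then gcd(q-1, (q+1)/m - 2) = gcd((q+1)/m - 2, 2(m-1)), and this quantity is at most √(2(q+1)) - 2. -/
/-- For an odd prime power `q` and `m ∣ q+1` with `2 ≤ m ≤ (q+1)/3`,
`gcd(q-1, (q+1)/m - 2) = gcd((q+1)/m - 2, 2(m-1))`, and this quantity is at most
`√(2(q+1)) - 2`. -/
theorem gcd_computation
    (q m : ℕ) (hq : ∃ p n : ℕ, p.Prime ∧ Odd p ∧ 0 < n ∧ q = p ^ n)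
    (hdvd : m ∣ q + 1) (hm2 : 2 ≤ m) (hm3 : 3 * m ≤ q + 1) :
    Nat.gcd (q - 1) ((q + 1) / m - 2) = Nat.gcd ((q + 1) / m - 2) (2 * (m - 1)) ∧
    (Nat.gcd (q - 1) ((q + 1) / m - 2) : ℝ) ≤ Real.sqrt (2 * (q + 1)) - 2 := by
  obtain ⟨k, hmk⟩ := hdvd
  have hm0 : 0 < m := by omega
  have hkdiv : (q + 1) / m = k := by
    rw [hmk, Nat.mul_div_cancel_left _ hm0]
  rw [hkdiv]
  have hk3 : 3 ≤ k := by
    by_contra h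
    push_neg at h
    interval_cases k <;> omega
  obtain ⟨k', rfl⟩ : ∃ k', k = k' + 2 := ⟨k - 2, by omega⟩
  obtain ⟨m', rfl⟩ : ∃ m', m = m' + 1 := ⟨m - 1, by omega⟩
  have hq1 : q - 1 = 2 * ((m' + 1) - 1) + ((k' + 2) - 2) * (m' + 1) := by
    have : q = 2 * m' + k' * (m' + 1) + 1 := by nlinarith
    rw [this]
    simp
  have heq : Nat.gcd (q - 1) (k' + 2 - 2) =
      Nat.gcd (k' + 2 - 2) (2 * (m' + 1 - 1)) := by
    rw [hq1, Nat.gcd_comm, Nat.gcd_add_mul_left_right]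
  refine ⟨heq, ?_⟩
  set g := Nat.gcd (q - 1) (k' + 2 - 2) with hg
  have hk2 : 0 < k' + 2 - 2 := by omega
  have hgk : g ≤ k' := by
    have := Nat.le_of_dvd hk2 (Nat.gcd_dvd_right (q - 1) (k' + 2 - 2))
    omega
  have hgm : g ≤ 2 * m' := by
    have := Nat.le_of_dvd (by omega) (Nat.gcd_dvd_right (k' + 2 - 2) (2 * (m' + 1 - 1)))
    rw [← heq] at this
    omega
  have hsq : ((g : ℝ) + 2) ^ 2 ≤ 2 * (q + 1) := by
    have h1 : (g + 2) * (g + 2) ≤ (k' + 2) * (2 * (m' + 1)) := by nlinarith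
    have h2 : (k' + 2) * (2 * (m' + 1)) = 2 * (q + 1) := by nlinarith
    have h3 := h1.trans_eq h2
    have : ((g + 2) * (g + 2) : ℝ) ≤ 2 * (q + 1 : ℕ) := by exact_mod_cast h3
    push_cast at this ⊢
    nlinarith [this]
  have hs : (g : ℝ) + 2 ≤ Real.sqrt (2 * (q + 1)) := by
    rw [show ((g : ℝ) + 2) = Real.sqrt (((g : ℝ) + 2) ^ 2) from
      (Real.sqrt_sq (by positivity)).symm]
    exact Real.sqrt_le_sqrt hsq
  linarith
end

section
/- Let r be an odd prime power, q = r^3, and m = r^2 - r + 1. Then m divides q + 1, m divides (r^6 - 1)/(r^2 - 1), and consequently every nonzero element of the subfield F_{r^2} of F_{q^2} = F_{r^6} is an m-th power in F_{q^2}^*; in particular the subfield F_{r^2} forms a clique in GP(q^2, m). -/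
/-- Let `r` be an odd prime power, `q = r^3`, `m = r^2 - r + 1`. Then
`m ∣ q+1`, `m ∣ (r^6-1)/(r^2-1)`, every nonzero element of the subfield `F_{r^2}` of
`F_{q^2} = F_{r^6}` is an `m`-th power, and `F_{r^2}` forms a clique in `GP(q^2,m)`. -/
theorem subfield_clique_counterexample
    (r : ℕ) (hr : ∃ p n : ℕ, p.Prime ∧ Odd p ∧ 0 < n ∧ r = p ^ n)
    (q m : ℕ) (hq : q = r ^ 3) (hm : m = r ^ 2 - r + 1)
    (F : Type*) [Field F] [Fintype F] (hF : Fintype.card F = q ^ 2) :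
    m ∣ q + 1 ∧
    m ∣ (r ^ 6 - 1) / (r ^ 2 - 1) ∧
    (∀ x : F, x ≠ 0 → x ^ (r ^ 2) = x → ∃ y : F, y ^ m = x) ∧
    (∀ x y : F, x ^ (r ^ 2) = x → y ^ (r ^ 2) = y → x ≠ y →
      ∃ z : F, z ≠ 0 ∧ z ^ m = x - y) := by
  obtain ⟨p, n, hp, hpodd, hn, rfl⟩ := hr
  have hr3 : 3 ≤ p ^ n := by
    have h3p : 3 ≤ p := by
      rcases hpodd with ⟨t, ht⟩
      have := hp.two_le
      omega
    exact h3p.trans (Nat.le_self_pow hn.ne' p)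
  set r := p ^ n with hrdef
  have hle : r ≤ r ^ 2 := Nat.le_self_pow (by norm_num) r
  have hle2 : 1 ≤ r ^ 2 := by nlinarith
  have hle6 : 1 ≤ r ^ 6 := Nat.one_le_pow _ _ (by omega)
  have hm0 : 0 < m := by omega
  -- arithmetic identities
  have h1 : (r + 1) * m = q + 1 := by
    zify [hle, hq, hm]; ring
  have hNd : r ^ 6 - 1 = (r ^ 2 - 1) * (r ^ 4 + r ^ 2 + 1) := by
    zify [hle2, hle6]; ring
  have hdiv : (r ^ 6 - 1) / (r ^ 2 - 1) = r ^ 4 + r ^ 2 + 1 := by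
    rw [hNd, Nat.mul_div_cancel_left _ (by omega)]
  have hms : m * (r ^ 2 + r + 1) = r ^ 4 + r ^ 2 + 1 := by
    zify [hle, hm]; ring
  classical
  have key : ∀ x : F, x ≠ 0 → x ^ (r ^ 2) = x → ∃ y : F, y ^ m = x := by
    intro x hx hfix
    have hcardF : Fintype.card F = r ^ 6 := by rw [hF, hq]; ring
    have hcardU : Fintype.card Fˣ = r ^ 6 - 1 := by
      rw [Fintype.card_units, hcardF]
    obtain ⟨g, hg⟩ := IsCyclic.exists_generator (α := Fˣ)
    set u : Fˣ := Units.mk0 x hx with hu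
    obtain ⟨k, hk0⟩ := mem_powers_iff_mem_zpowers.mpr (hg u)
    have hk : g ^ k = u := hk0
    have hog : orderOf g = r ^ 6 - 1 := by
      rw [orderOf_eq_card_of_forall_mem_zpowers hg, Nat.card_eq_fintype_card, hcardU]
    have hu1 : u ^ (r ^ 2 - 1) = 1 := by
      have hxx : x ^ (r ^ 2 - 1) * x = x := by
        rw [← pow_succ, Nat.sub_add_cancel hle2, hfix]
      ext
      push_cast [hu]
      exact mul_right_cancel₀ hx (by simpa using hxx)
    have hgk : g ^ (k * (r ^ 2 - 1)) = 1 := by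
      rw [pow_mul, hk, hu1]
    have hdvd : (r ^ 6 - 1) ∣ k * (r ^ 2 - 1) := by
      rw [← hog]; exact orderOf_dvd_of_pow_eq_one hgk
    rw [hNd] at hdvd
    have hdk : (r ^ 4 + r ^ 2 + 1) ∣ k :=
      (Nat.mul_dvd_mul_iff_right (show 0 < r ^ 2 - 1 by omega)).mp
        (by rwa [mul_comm (r ^ 2 - 1)] at hdvd)
    obtain ⟨t, ht⟩ := hdk
    refine ⟨((g ^ ((r ^ 2 + r + 1) * t) : Fˣ) : F), ?_⟩
    have hpow : (g ^ ((r ^ 2 + r + 1) * t)) ^ m = u := by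
      rw [← pow_mul, ← hk, ht, ← hms]; ring_nf
    calc ((g ^ ((r ^ 2 + r + 1) * t) : Fˣ) : F) ^ m
        = ((g ^ ((r ^ 2 + r + 1) * t)) ^ m : Fˣ) := by push_cast; ring
      _ = (u : F) := by rw [hpow]
      _ = x := rfl
  refine ⟨⟨r + 1, by rw [← h1, mul_comm]⟩, by rw [hdiv]; exact ⟨r ^ 2 + r + 1, hms.symm⟩, key, ?_⟩
  intro x y hxf hyf hxy
  have hcardF : Fintype.card F = p ^ (6 * n) := by rw [hF, hq, hrdef]; ring
  have hchar : CharP F p := by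
    obtain ⟨c, hc⟩ := CharP.exists F
    haveI := hc
    obtain ⟨k, hcp, hck⟩ := FiniteField.card F c
    have hcd : c ∣ p ^ (6 * n) := by
      rw [← hcardF, hck]
      exact dvd_pow_self c k.pos.ne'
    have : c = p := (Nat.prime_dvd_prime_iff_eq hcp hp).mp (hcp.dvd_of_dvd_pow hcd)
    rwa [this] at hc
  haveI := hchar
  haveI : Fact p.Prime := ⟨hp⟩
  have hfrob : (x - y) ^ (r ^ 2) = x ^ (r ^ 2) - y ^ (r ^ 2) := by
    have h2 : r ^ 2 = p ^ (2 * n) := by rw [hrdef]; ring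
    rw [h2]
    exact sub_pow_char_pow x y (2 * n)
  have hz : x - y ≠ 0 := sub_ne_zero_of_ne hxy
  have hfix : (x - y) ^ (r ^ 2) = x - y := by rw [hfrob, hxf, hyf]
  obtain ⟨z, hzm⟩ := key (x - y) hz hfix
  refine ⟨z, ?_, hzm⟩
  intro h0
  rw [h0, zero_pow hm0.ne'] at hzm
  exact hz hzm.symm
end
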